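/- arXiv:1902.02213 — 3 statements merged into one kernel-verified Lean document; each statement's English description precedes it below -/
import Mathlib

section
/- Let F = F(x,y,z,w) ∈ ℚ[[x,y,z,w]] be the formal power series F = Σ_{n≥0} Σ_{π ∈ I_n(3412)} x^n y^{inv(π)} z^{des(π)} w^{fix(π)}. Then F satisfies the functional equation F(x,y,z,w) = 1 + xw·F(x,y,z,w) + x²yz·F(x,y,z,w) + x²yz²·(F(xy²,y,z,w) − 1)·F(x,y,z,w), where F(xy²,y,z,w) denotes the series obtained from F by substituting xy² for x. -/
open scoped Classical

noncomputable section

/-- Steps of a Motzkin path: up, down, horizontal. -/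
inductive Step : Type
  | U : Step
  | D : Step
  | H : Step
  deriving DecidableEq

/-- Steps of a bicolored Motzkin path: up, down, horizontal of color `c₁`,
horizontal of color `c₂`. -/
inductive CStep : Type
  | U : CStep
  | D : CStep
  | H : CStep
  | Ht : CStep
  deriving DecidableEq

/-- A word over `{U,D,H}` is a Motzkin word if the numbers of `U`'s and `D`'s agree
and every prefix has at least as many `U`'s as `D`'s. -/
def IsMotzkin (w : List Step) : Prop :=
  w.count Step.U = w.count Step.D ∧
  ∀ k, (w.take k).count Step.D ≤ (w.take k).count Step.U

/-- The `y`-coordinate of the lattice point reached after the first `i` steps. -/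
def levelAt (w : List Step) (i : ℕ) : ℕ :=
  (w.take i).count Step.U - (w.take i).count Step.D

/-- The height of the `i`-th step (0-indexed): the `y`-coordinate of its ending
point for a down step, of its starting point otherwise. -/
def heightAt (w : List Step) (i : ℕ) : ℕ :=
  if w.getD i Step.H = Step.D then levelAt w (i + 1) else levelAt w i

/-- Twice the area between the path and the `x`-axis (trapezoid rule). -/
def twoArea (w : List Step) : ℕ :=
  ∑ i ∈ Finset.range w.length, (levelAt w i + levelAt w (i + 1))

/-- The number of occurrences of `p` as a factor (subword of consecutive letters) of `w`. -/
def occFactor (p w : List Step) : ℕ :=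
  ((Finset.range w.length).filter fun i => p <+: w.drop i).card

/-- The `y`-coordinate reached after `i` steps, bicolored version. -/
def cLevelAt (w : List CStep) (i : ℕ) : ℕ :=
  (w.take i).count CStep.U - (w.take i).count CStep.D

/-- The height of the `i`-th step, bicolored version. -/
def cHeightAt (w : List CStep) (i : ℕ) : ℕ :=
  if w.getD i CStep.H = CStep.D then cLevelAt w (i + 1) else cLevelAt w i

/-- A bicolored Motzkin word: a Motzkin word whose horizontal steps have two possible
colors (`H` and `Ht`), horizontal steps at height `0` not being allowed to have the
second color. -/
def IsBicoloredMotzkin (w : List CStep) : Prop :=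
  w.count CStep.U = w.count CStep.D ∧
  (∀ k, (w.take k).count CStep.D ≤ (w.take k).count CStep.U) ∧
  (∀ i < w.length, w.getD i CStep.H = CStep.Ht → cHeightAt w i ≠ 0)

/-- A histoire de Laguerre of length `n`: a bicolored Motzkin path of length `n`
together with a sequence `l` of nonnegative integers such that `l i ≤ h i` for each
step, the inequality being strict for the horizontal steps of the second color
(the "suitable constraints" of De Medicis and Viennot). -/
def IsLaguerre (n : ℕ) (dl : List CStep × List ℕ) : Prop :=
  dl.1.length = n ∧ dl.2.length = n ∧ IsBicoloredMotzkin dl.1 ∧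
  ∀ i < n, dl.2.getD i 0 ≤ cHeightAt dl.1 i ∧
    (dl.1.getD i CStep.H = CStep.Ht → dl.2.getD i 0 < cHeightAt dl.1 i)

/-- A labelled Motzkin path of length `n`: a Motzkin path whose down steps carry a
label not exceeding their height, all other steps carrying the label `0` (unlabelled). -/
def IsLabelledMotzkin (n : ℕ) (dl : List Step × List ℕ) : Prop :=
  dl.1.length = n ∧ dl.2.length = n ∧ IsMotzkin dl.1 ∧
  ∀ i < n, (dl.1.getD i Step.H = Step.D → dl.2.getD i 0 ≤ heightAt dl.1 i) ∧
    (dl.1.getD i Step.H ≠ Step.D → dl.2.getD i 0 = 0)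

/-- The embedding of plain Motzkin steps into bicolored steps. -/
def Step.toC : Step → CStep
  | Step.U => CStep.U
  | Step.D => CStep.D
  | Step.H => CStep.H

/-- The value (as a natural number, 0-indexed) of the permutation `π` at the
(0-indexed) position `i`; junk value `0` out of range. -/
def pv {n : ℕ} (π : Equiv.Perm (Fin n)) (i : ℕ) : ℕ :=
  if h : i < n then (π ⟨i, h⟩ : Fin n).val else 0

/-- Position `p` starts an ascending run of `π` (in one-line notation):
either `p = 0` or there is a descent just before `p`. -/
def RunStartAt {n : ℕ} (π : Equiv.Perm (Fin n)) (p : Fin n) : Prop :=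
  ∀ q : Fin n, (q : ℕ) + 1 = (p : ℕ) → π p < π q

/-- Position `p` ends an ascending run of `π`. -/
def RunEndAt {n : ℕ} (π : Equiv.Perm (Fin n)) (p : Fin n) : Prop :=
  ∀ q : Fin n, (p : ℕ) + 1 = (q : ℕ) → π q < π p

/-- The step of the bicolored Motzkin path `Γ(π)` associated with the value `v`:
`U` if `v` is a head, `D` if it is a tail, `H` if it is a head-tail, `Ht` if it
is a boarder. -/
def gammaStep {n : ℕ} (π : Equiv.Perm (Fin n)) (v : Fin n) : CStep :=
  if RunStartAt π (π.symm v) then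
    if RunEndAt π (π.symm v) then CStep.H else CStep.U
  else
    if RunEndAt π (π.symm v) then CStep.D else CStep.Ht

/-- The label of `Γ(π)` at the value `v`: the number of ascending runs of `π`
(determined by the position `pq.1` of their first element and the position `pq.2`
of their last element) whose first value is `< v`, whose last value is `> v`, and
whose last element precedes `v` in `π`. -/
def gammaLabel {n : ℕ} (π : Equiv.Perm (Fin n)) (v : Fin n) : ℕ :=
  (Finset.univ.filter fun pq : Fin n × Fin n =>
    RunStartAt π pq.1 ∧ RunEndAt π pq.2 ∧ pq.1 ≤ pq.2 ∧
    (∀ r : Fin n, pq.1 ≤ r → r < pq.2 → ¬ RunEndAt π r) ∧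
    π pq.1 < v ∧ v < π pq.2 ∧ pq.2 < π.symm v).card

/-- The map `Γ` from permutations to pairs (bicolored Motzkin path, label sequence). -/
def Gamma {n : ℕ} (π : Equiv.Perm (Fin n)) : List CStep × List ℕ :=
  (List.ofFn fun v => gammaStep π v, List.ofFn fun v => gammaLabel π v)

/-- The (uncolored) Motzkin path `Γ(π)` for permutations with no boarders:
`U` for heads, `D` for tails, `H` for head-tails. -/
def gammaPath {n : ℕ} (π : Equiv.Perm (Fin n)) : List Step :=
  List.ofFn fun v : Fin n =>
    if RunStartAt π (π.symm v) then
      if RunEndAt π (π.symm v) then Step.H else Step.U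
    else
      if RunEndAt π (π.symm v) then Step.D else Step.H

/-- `π` is an involution. -/
def IsInvolution {n : ℕ} (π : Equiv.Perm (Fin n)) : Prop :=
  ∀ x, π (π x) = x

/-- The Motzkin path `Ψ(π)` of an involution `π`: `H` at fixed points, `U` at the
smaller element of a 2-cycle, `D` at the larger element of a 2-cycle. -/
def psiWord {n : ℕ} (π : Equiv.Perm (Fin n)) : List Step :=
  List.ofFn fun v : Fin n =>
    if π v = v then Step.H else if v < π v then Step.U else Step.D

/-- The label of `Ψ(π)` at `v`: if `v` is the larger element of a 2-cycle
`(π v, v)`, the number of 2-cycles `(x, π x)` with `π v < x < v < π x`; `0` otherwise. -/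
def psiLabel {n : ℕ} (π : Equiv.Perm (Fin n)) (v : Fin n) : ℕ :=
  if π v < v then
    (Finset.univ.filter fun x : Fin n => π v < x ∧ x < v ∧ v < π x).card
  else 0

/-- The map `Ψ` from involutions to labelled Motzkin paths. -/
def Psi {n : ℕ} (π : Equiv.Perm (Fin n)) : List Step × List ℕ :=
  (psiWord π, List.ofFn fun v => psiLabel π v)

/-- Number of inversions of `π`. -/
def invCount {n : ℕ} (π : Equiv.Perm (Fin n)) : ℕ :=
  (Finset.univ.filter fun p : Fin n × Fin n => p.1 < p.2 ∧ π p.2 < π p.1).card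

/-- Number of coinversions of `π`. -/
def coinvCount {n : ℕ} (π : Equiv.Perm (Fin n)) : ℕ :=
  (Finset.univ.filter fun p : Fin n × Fin n => p.1 < p.2 ∧ π p.1 < π p.2).card

/-- Number of descents of `π`. -/
def desCount {n : ℕ} (π : Equiv.Perm (Fin n)) : ℕ :=
  ((Finset.range (n - 1)).filter fun i => pv π (i + 1) < pv π i).card

/-- Number of ascents of `π`. -/
def ascCount {n : ℕ} (π : Equiv.Perm (Fin n)) : ℕ :=
  ((Finset.range (n - 1)).filter fun i => pv π i < pv π (i + 1)).card

/-- Number of fixed points of `π`. -/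
def fixCount {n : ℕ} (π : Equiv.Perm (Fin n)) : ℕ :=
  (Finset.univ.filter fun i : Fin n => π i = i).card

/-- Number of occurrences of the consecutive pattern 123 in `π`. -/
def occC123 {n : ℕ} (π : Equiv.Perm (Fin n)) : ℕ :=
  ((Finset.range (n - 2)).filter fun i =>
    pv π i < pv π (i + 1) ∧ pv π (i + 1) < pv π (i + 2)).card

/-- Number of occurrences of the consecutive pattern 132 in `π`. -/
def occC132 {n : ℕ} (π : Equiv.Perm (Fin n)) : ℕ :=
  ((Finset.range (n - 2)).filter fun i =>
    pv π i < pv π (i + 2) ∧ pv π (i + 2) < pv π (i + 1)).card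

/-- Number of occurrences of the consecutive pattern 213 in `π`. -/
def occC213 {n : ℕ} (π : Equiv.Perm (Fin n)) : ℕ :=
  ((Finset.range (n - 2)).filter fun i =>
    pv π (i + 1) < pv π i ∧ pv π i < pv π (i + 2)).card

/-- Number of occurrences of the consecutive pattern 231 in `π`. -/
def occC231 {n : ℕ} (π : Equiv.Perm (Fin n)) : ℕ :=
  ((Finset.range (n - 2)).filter fun i =>
    pv π (i + 2) < pv π i ∧ pv π i < pv π (i + 1)).card

/-- Number of occurrences of the consecutive pattern 312 in `π`. -/
def occC312 {n : ℕ} (π : Equiv.Perm (Fin n)) : ℕ :=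
  ((Finset.range (n - 2)).filter fun i =>
    pv π (i + 1) < pv π (i + 2) ∧ pv π (i + 2) < pv π i).card

/-- Number of occurrences of the consecutive pattern 321 in `π`. -/
def occC321 {n : ℕ} (π : Equiv.Perm (Fin n)) : ℕ :=
  ((Finset.range (n - 2)).filter fun i =>
    pv π (i + 2) < pv π (i + 1) ∧ pv π (i + 1) < pv π i).card

/-- `π` contains the classical pattern 132. -/
def Contains132 {n : ℕ} (π : Equiv.Perm (Fin n)) : Prop :=
  ∃ i j k : Fin n, i < j ∧ j < k ∧ π i < π k ∧ π k < π j

/-- `π` contains the consecutive pattern 123. -/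
def ContainsC123 {n : ℕ} (π : Equiv.Perm (Fin n)) : Prop :=
  ∃ i j k : Fin n, (i : ℕ) + 1 = (j : ℕ) ∧ (j : ℕ) + 1 = (k : ℕ) ∧ π i < π j ∧ π j < π k

/-- `π` contains the classical pattern 3412. -/
def Contains3412 {n : ℕ} (π : Equiv.Perm (Fin n)) : Prop :=
  ∃ i₁ i₂ i₃ i₄ : Fin n, i₁ < i₂ ∧ i₂ < i₃ ∧ i₃ < i₄ ∧
    π i₃ < π i₄ ∧ π i₄ < π i₁ ∧ π i₁ < π i₂

/-- `π` contains the vincular pattern 1-2̲3̲. -/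
def Contains1_23 {n : ℕ} (π : Equiv.Perm (Fin n)) : Prop :=
  ∃ i j k : Fin n, i < j ∧ (j : ℕ) + 1 = (k : ℕ) ∧ π i < π j ∧ π j < π k

/-- `π` contains the vincular pattern 1-3̲2̲. -/
def Contains1_32 {n : ℕ} (π : Equiv.Perm (Fin n)) : Prop :=
  ∃ i j k : Fin n, i < j ∧ (j : ℕ) + 1 = (k : ℕ) ∧ π i < π k ∧ π k < π j

/-- `w` is the one-line notation of a permutation of `{0, …, n-1}`. -/
def IsPermWord (n : ℕ) (w : List ℕ) : Prop :=
  List.Perm w (List.range n)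

/-- Position `p` starts an ascending run of the word `w`. -/
def wRunStart (w : List ℕ) (p : ℕ) : Prop :=
  p = 0 ∨ w.getD p 0 < w.getD (p - 1) 0

/-- Position `p` ends an ascending run of the word `w`. -/
def wRunEnd (w : List ℕ) (p : ℕ) : Prop :=
  p + 1 = w.length ∨ w.getD (p + 1) 0 < w.getD p 0

/-- The step of `Γ(w)` associated with the value `v`. -/
def wGammaStep (w : List ℕ) (v : ℕ) : CStep :=
  if wRunStart w (w.idxOf v) then
    if wRunEnd w (w.idxOf v) then CStep.H else CStep.U
  else
    if wRunEnd w (w.idxOf v) then CStep.D else CStep.Ht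

/-- The label of `Γ(w)` at the value `v`. -/
def wGammaLabel (w : List ℕ) (v : ℕ) : ℕ :=
  ((Finset.range w.length ×ˢ Finset.range w.length).filter fun pq =>
    wRunStart w pq.1 ∧ wRunEnd w pq.2 ∧ pq.1 ≤ pq.2 ∧
    (∀ r, pq.1 ≤ r → r < pq.2 → ¬ wRunEnd w r) ∧
    w.getD pq.1 0 < v ∧ v < w.getD pq.2 0 ∧ pq.2 < w.idxOf v).card

/-- The map `Γ` on one-line words. -/
def wGamma (w : List ℕ) : List CStep × List ℕ :=
  ((List.range w.length).map (wGammaStep w), (List.range w.length).map (wGammaLabel w))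

/-- The word `w` contains the vincular pattern 1-2̲3̲. -/
def wContains1_23 (w : List ℕ) : Prop :=
  ∃ i j, i < j ∧ j + 1 < w.length ∧
    w.getD i 0 < w.getD j 0 ∧ w.getD j 0 < w.getD (j + 1) 0

/-- The word `w` contains the vincular pattern 1-3̲2̲. -/
def wContains1_32 (w : List ℕ) : Prop :=
  ∃ i j, i < j ∧ j + 1 < w.length ∧
    w.getD i 0 < w.getD (j + 1) 0 ∧ w.getD (j + 1) 0 < w.getD j 0

/-- The word `w` contains the classical pattern 132. -/
def wContains132 (w : List ℕ) : Prop :=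
  ∃ i j k, i < j ∧ j < k ∧ k < w.length ∧
    w.getD i 0 < w.getD k 0 ∧ w.getD k 0 < w.getD j 0

/-- The word `w` contains the consecutive pattern 123. -/
def wContainsC123 (w : List ℕ) : Prop :=
  ∃ i, i + 2 < w.length ∧
    w.getD i 0 < w.getD (i + 1) 0 ∧ w.getD (i + 1) 0 < w.getD (i + 2) 0

/-- The one-line word of the Foata image `F(π)` of an involution `π`: write `π` in
standard cycle notation (each cycle with its least element first, cycles in
decreasing order of their least elements) and erase the parentheses. -/
def foataWord {n : ℕ} (π : Equiv.Perm (Fin n)) : List ℕ :=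
  (((List.range n).reverse).map fun m =>
    if pv π m = m then [m]
    else if m < pv π m then [m, pv π m]
    else ([] : List ℕ)).flatten

/-- The number of long tunnels of `d`: occurrences of factors `U α D` with `α` a
nonempty Motzkin word. -/
def longTunnelCount (d : List Step) : ℕ :=
  ((Finset.range d.length ×ˢ Finset.range d.length).filter fun ij =>
    ij.1 + 1 < ij.2 ∧ d.getD ij.1 Step.H = Step.U ∧ d.getD ij.2 Step.H = Step.D ∧
    IsMotzkin ((d.drop (ij.1 + 1)).take (ij.2 - ij.1 - 1))).card

/-- The number of weak valleys of `d`: occurrences of the factors `HH, HU, DH, DU`. -/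
def weakValleyCount (d : List Step) : ℕ :=
  occFactor [Step.H, Step.H] d + occFactor [Step.H, Step.U] d +
  occFactor [Step.D, Step.H] d + occFactor [Step.D, Step.U] d

end

/-- The generating function `F(x,y,z,w) = Σ_{n≥0} Σ_{π ∈ I_n(3412)}
x^n y^{inv π} z^{des π} w^{fix π}`, with `x = X 0`, `y = X 1`, `z = X 2`, `w = X 3`. -/
noncomputable def Finv : MvPowerSeries (Fin 4) ℚ := fun m =>
  ({π : Equiv.Perm (Fin (m 0)) | IsInvolution π ∧ ¬ Contains3412 π ∧
    invCount π = m 1 ∧ desCount π = m 2 ∧ fixCount π = m 3}.ncard : ℚ)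

/-- The series `F(xy², y, z, w)` obtained from `Finv` by substituting `xy²` for `x`:
its coefficient on `x^n y^b z^c w^d` counts `π ∈ I_n(3412)` with `inv π + 2n = b`,
`des π = c`, `fix π = d`. -/
noncomputable def FinvSub : MvPowerSeries (Fin 4) ℚ := fun m =>
  ({π : Equiv.Perm (Fin (m 0)) | IsInvolution π ∧ ¬ Contains3412 π ∧
    invCount π + 2 * (m 0) = m 1 ∧ desCount π = m 2 ∧ fixCount π = m 3}.ncard : ℚ)

noncomputable section FE

open Finset Equiv

variable {n : ℕ}

lemma pv_def (π : Equiv.Perm (Fin n)) {i : ℕ} (h : i < n) : pv π i = (π ⟨i, h⟩).val := by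
  simp [pv, h]

lemma pv_lt (π : Equiv.Perm (Fin n)) {i : ℕ} (h : i < n) : pv π i < n := by
  rw [pv_def π h]; exact (π ⟨i, h⟩).2

lemma pv_fin (π : Equiv.Perm (Fin n)) (i : Fin n) : pv π i.val = (π i).val := by
  rw [pv_def π i.2]

lemma pv_symm_pv (π : Equiv.Perm (Fin n)) {i : ℕ} (h : i < n) :
    pv π.symm (pv π i) = i := by
  rw [pv_def π h, pv_fin π.symm (π ⟨i, h⟩)]
  simp

lemma pv_pv_symm (π : Equiv.Perm (Fin n)) {i : ℕ} (h : i < n) :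
    pv π (pv π.symm i) = i := by
  rw [pv_def π.symm h, pv_fin π (π.symm ⟨i, h⟩)]
  simp

lemma pv_inj (π : Equiv.Perm (Fin n)) {i j : ℕ} (hi : i < n) (hj : j < n)
    (h : pv π i = pv π j) : i = j := by
  have := pv_symm_pv π hi
  rw [h, pv_symm_pv π hj] at this
  omega

lemma pv_ext {π ρ : Equiv.Perm (Fin n)} (h : ∀ i < n, pv π i = pv ρ i) : π = ρ := by
  apply Equiv.ext
  intro i
  have := h i.val i.2
  rw [pv_fin, pv_fin] at this
  exact Fin.ext this

/-- Transport a permutation along an equality of sizes. -/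
def permCast {n m : ℕ} (h : n = m) (π : Equiv.Perm (Fin n)) : Equiv.Perm (Fin m) :=
  (finCongr h).permCongr π

lemma pv_permCast {m : ℕ} (h : n = m) (π : Equiv.Perm (Fin n)) (i : ℕ) :
    pv (permCast h π) i = pv π i := by
  subst h
  rfl

/- characterizations through `pv` -/

lemma invCount_eq (π : Equiv.Perm (Fin n)) :
    invCount π = ∑ i ∈ range n, ∑ j ∈ range n,
      if i < j ∧ pv π j < pv π i then 1 else 0 := by
  rw [invCount, Finset.card_filter, Fintype.sum_prod_type]
  rw [← Fin.sum_univ_eq_sum_range (fun i => ∑ j ∈ range n, if i < j ∧ pv π j < pv π i then 1 else 0)]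
  apply Finset.sum_congr rfl
  intro i _
  rw [← Fin.sum_univ_eq_sum_range (fun j => if (i:ℕ) < j ∧ pv π j < pv π (i:ℕ) then 1 else 0)]
  apply Finset.sum_congr rfl
  intro j _
  apply if_congr _ rfl rfl
  rw [pv_fin, pv_fin, Fin.lt_def, Fin.lt_def]

lemma desCount_eq (π : Equiv.Perm (Fin n)) :
    desCount π = ∑ i ∈ range (n-1), if pv π (i+1) < pv π i then 1 else 0 := by
  rw [desCount, Finset.card_filter]

lemma fixCount_eq (π : Equiv.Perm (Fin n)) :
    fixCount π = ∑ i ∈ range n, if pv π i = i then 1 else 0 := by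
  rw [fixCount, Finset.card_filter]
  rw [← Fin.sum_univ_eq_sum_range (fun i => if pv π i = i then 1 else 0)]
  apply Finset.sum_congr rfl
  intro i _
  apply if_congr _ rfl rfl
  rw [pv_fin]
  exact Fin.ext_iff

lemma isInvolution_iff (π : Equiv.Perm (Fin n)) :
    IsInvolution π ↔ ∀ i < n, pv π (pv π i) = i := by
  constructor
  · intro h i hi
    rw [pv_def π hi, pv_fin]
    have := h ⟨i, hi⟩
    rw [this]
  · intro h x
    have := h x.val x.2
    rw [pv_fin, pv_fin] at this
    exact Fin.ext this

lemma contains3412_iff (π : Equiv.Perm (Fin n)) :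
    Contains3412 π ↔ ∃ i₁ i₂ i₃ i₄ : ℕ, i₁ < i₂ ∧ i₂ < i₃ ∧ i₃ < i₄ ∧ i₄ < n ∧
      pv π i₃ < pv π i₄ ∧ pv π i₄ < pv π i₁ ∧ pv π i₁ < pv π i₂ := by
  constructor
  · rintro ⟨a, b, c, d, h1, h2, h3, h4, h5, h6⟩
    exact ⟨a, b, c, d, h1, h2, h3, d.2, by
      rw [pv_fin, pv_fin]; exact h4, by rw [pv_fin, pv_fin]; exact h5, by
      rw [pv_fin, pv_fin]; exact h6⟩
  · rintro ⟨a, b, c, d, h1, h2, h3, h4, h5, h6, h7⟩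
    have ha : a < n := by omega
    have hb : b < n := by omega
    have hc : c < n := by omega
    refine ⟨⟨a, ha⟩, ⟨b, hb⟩, ⟨c, hc⟩, ⟨d, h4⟩, h1, h2, h3, ?_, ?_, ?_⟩ <;>
      rw [Fin.lt_def] <;> rw [← pv_fin, ← pv_fin] <;> assumption

lemma invCount_permCast {m : ℕ} (h : n = m) (π : Equiv.Perm (Fin n)) :
    invCount (permCast h π) = invCount π := by
  subst h; rw [invCount_eq, invCount_eq]
  simp [pv_permCast]

lemma desCount_permCast {m : ℕ} (h : n = m) (π : Equiv.Perm (Fin n)) :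
    desCount (permCast h π) = desCount π := by
  subst h; rw [desCount_eq, desCount_eq]
  simp [pv_permCast]

lemma fixCount_permCast {m : ℕ} (h : n = m) (π : Equiv.Perm (Fin n)) :
    fixCount (permCast h π) = fixCount π := by
  subst h; rw [fixCount_eq, fixCount_eq]
  simp [pv_permCast]

lemma isInvolution_permCast {m : ℕ} (h : n = m) (π : Equiv.Perm (Fin n)) :
    IsInvolution (permCast h π) ↔ IsInvolution π := by
  subst h; rw [isInvolution_iff, isInvolution_iff]
  simp [pv_permCast]

lemma contains3412_permCast {m : ℕ} (h : n = m) (π : Equiv.Perm (Fin n)) :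
    Contains3412 (permCast h π) ↔ Contains3412 π := by
  subst h; rw [contains3412_iff, contains3412_iff]
  simp [pv_permCast]

end FE

noncomputable section FE2

open Finset Equiv

variable {n : ℕ}

/-- window statistics -/
def winInv (π : Equiv.Perm (Fin n)) (l w : ℕ) : ℕ :=
  ∑ i ∈ range w, ∑ j ∈ range w, if i < j ∧ pv π (l+j) < pv π (l+i) then 1 else 0

def winDes (π : Equiv.Perm (Fin n)) (l w : ℕ) : ℕ :=
  ∑ i ∈ range (w-1), if pv π (l+i+1) < pv π (l+i) then 1 else 0

def winFix (π : Equiv.Perm (Fin n)) (l w : ℕ) : ℕ :=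
  ∑ i ∈ range w, if pv π (l+i) = l+i then 1 else 0

/-- restriction of a permutation to an invariant window `[l, l+w)` -/
def chop (π : Equiv.Perm (Fin n)) (l w : ℕ) (hlw : l + w ≤ n)
    (hcl : ∀ i < n, (l ≤ i ∧ i < l + w) ↔ (l ≤ pv π i ∧ pv π i < l + w)) :
    Equiv.Perm (Fin w) where
  toFun i := ⟨pv π (l + i.val) - l, by
    have h1 : l + i.val < n := by omega
    have := (hcl (l + i.val) h1).mp (by omega)
    omega⟩
  invFun i := ⟨pv π.symm (l + i.val) - l, by
    have h1 : l + i.val < n := by omega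
    have h2 : pv π.symm (l + i.val) < n := pv_lt _ h1
    have := (hcl (pv π.symm (l + i.val)) h2).mpr (by
      rw [pv_pv_symm π h1]; omega)
    omega⟩
  left_inv := by
    intro i
    have h1 : l + i.val < n := by omega
    have hp := (hcl (l + i.val) h1).mp (by omega)
    apply Fin.ext
    simp only
    rw [show l + (pv π (l + i.val) - l) = pv π (l + i.val) by omega]
    rw [pv_symm_pv π h1]
    omega
  right_inv := by
    intro i
    have h1 : l + i.val < n := by omega
    have h2 : pv π.symm (l + i.val) < n := pv_lt _ h1
    have hp := (hcl (pv π.symm (l + i.val)) h2).mpr (by rw [pv_pv_symm π h1]; omega)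
    apply Fin.ext
    simp only
    rw [show l + (pv π.symm (l + i.val) - l) = pv π.symm (l + i.val) by omega]
    rw [pv_pv_symm π h1]
    omega

lemma pv_chop (π : Equiv.Perm (Fin n)) (l w : ℕ) (hlw : l + w ≤ n)
    (hcl : ∀ i < n, (l ≤ i ∧ i < l + w) ↔ (l ≤ pv π i ∧ pv π i < l + w)) {i : ℕ}
    (hi : i < w) : pv (chop π l w hlw hcl) i = pv π (l + i) - l := by
  rw [pv_def _ hi]
  rfl

lemma pv_chop_ge (π : Equiv.Perm (Fin n)) (l w : ℕ) (hlw : l + w ≤ n)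
    (hcl : ∀ i < n, (l ≤ i ∧ i < l + w) ↔ (l ≤ pv π i ∧ pv π i < l + w)) {i : ℕ}
    (hi : i < w) : l ≤ pv π (l + i) ∧ pv π (l + i) < l + w :=
  (hcl (l+i) (by omega)).mp (by omega)

lemma invCount_chop (π : Equiv.Perm (Fin n)) (l w : ℕ) (hlw : l + w ≤ n)
    (hcl : ∀ i < n, (l ≤ i ∧ i < l + w) ↔ (l ≤ pv π i ∧ pv π i < l + w)) :
    invCount (chop π l w hlw hcl) = winInv π l w := by
  rw [invCount_eq, winInv]
  apply Finset.sum_congr rfl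
  intro i hi
  apply Finset.sum_congr rfl
  intro j hj
  rw [mem_range] at hi hj
  have hbi := pv_chop_ge π l w hlw hcl hi
  have hbj := pv_chop_ge π l w hlw hcl hj
  rw [pv_chop π l w hlw hcl hi, pv_chop π l w hlw hcl hj]
  apply if_congr _ rfl rfl
  constructor <;> (rintro ⟨h1, h2⟩; exact ⟨h1, by omega⟩)

lemma desCount_chop (π : Equiv.Perm (Fin n)) (l w : ℕ) (hlw : l + w ≤ n)
    (hcl : ∀ i < n, (l ≤ i ∧ i < l + w) ↔ (l ≤ pv π i ∧ pv π i < l + w)) :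
    desCount (chop π l w hlw hcl) = winDes π l w := by
  rw [desCount_eq, winDes]
  apply Finset.sum_congr rfl
  intro i hi
  rw [mem_range] at hi
  have hbi := pv_chop_ge π l w hlw hcl (show i < w by omega)
  have hbj := pv_chop_ge π l w hlw hcl (show i+1 < w by omega)
  rw [show l + (i+1) = l + i + 1 by omega] at hbj
  rw [pv_chop π l w hlw hcl (show i < w by omega),
    pv_chop π l w hlw hcl (show i+1 < w by omega)]
  rw [show l + (i+1) = l + i + 1 by omega]
  apply if_congr _ rfl rfl
  omega

lemma fixCount_chop (π : Equiv.Perm (Fin n)) (l w : ℕ) (hlw : l + w ≤ n)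
    (hcl : ∀ i < n, (l ≤ i ∧ i < l + w) ↔ (l ≤ pv π i ∧ pv π i < l + w)) :
    fixCount (chop π l w hlw hcl) = winFix π l w := by
  rw [fixCount_eq, winFix]
  apply Finset.sum_congr rfl
  intro i hi
  rw [mem_range] at hi
  have hbi := pv_chop_ge π l w hlw hcl hi
  rw [pv_chop π l w hlw hcl hi]
  apply if_congr _ rfl rfl
  omega

lemma isInvolution_chop (π : Equiv.Perm (Fin n)) (l w : ℕ) (hlw : l + w ≤ n)
    (hcl : ∀ i < n, (l ≤ i ∧ i < l + w) ↔ (l ≤ pv π i ∧ pv π i < l + w))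
    (h : IsInvolution π) : IsInvolution (chop π l w hlw hcl) := by
  rw [isInvolution_iff] at h ⊢
  intro i hi
  have hbi := pv_chop_ge π l w hlw hcl hi
  rw [pv_chop π l w hlw hcl hi, pv_chop π l w hlw hcl (show pv π (l+i) - l < w by omega)]
  rw [show l + (pv π (l+i) - l) = pv π (l+i) by omega, h (l+i) (by omega)]
  omega

lemma contains3412_chop (π : Equiv.Perm (Fin n)) (l w : ℕ) (hlw : l + w ≤ n)
    (hcl : ∀ i < n, (l ≤ i ∧ i < l + w) ↔ (l ≤ pv π i ∧ pv π i < l + w))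
    (h : Contains3412 (chop π l w hlw hcl)) : Contains3412 π := by
  rw [contains3412_iff] at h ⊢
  obtain ⟨a, b, c, d, h1, h2, h3, h4, h5, h6, h7⟩ := h
  have ha : a < w := by omega
  have hb : b < w := by omega
  have hc : c < w := by omega
  have hba := pv_chop_ge π l w hlw hcl ha
  have hbb := pv_chop_ge π l w hlw hcl hb
  have hbc := pv_chop_ge π l w hlw hcl hc
  have hbd := pv_chop_ge π l w hlw hcl h4
  have ea := pv_chop π l w hlw hcl ha
  have eb := pv_chop π l w hlw hcl hb
  have ec := pv_chop π l w hlw hcl hc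
  have ed := pv_chop π l w hlw hcl h4
  rw [ea, eb] at h7
  rw [ec, ed] at h5
  rw [ed, ea] at h6
  exact ⟨l+a, l+b, l+c, l+d, by omega, by omega, by omega, by omega,
    by omega, by omega, by omega⟩

end FE2

noncomputable section FE3

open Finset Equiv

lemma sum_split2 (q : ℕ) (f : ℕ → ℕ) :
    ∑ i ∈ range (q+1), f i = f 0 + ∑ i ∈ range q, f (i+1) := by
  rw [Finset.sum_range_succ']; omega

lemma sum_split4 (a b : ℕ) (f : ℕ → ℕ) :
    ∑ i ∈ range (a+b+2), f i
      = f 0 + (∑ i ∈ range a, f (i+1)) + f (a+1) + ∑ i ∈ range b, f (a+2+i) := by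
  rw [show a+b+2 = (a+2)+b by omega, Finset.sum_range_add, Finset.sum_range_succ,
    Finset.sum_range_succ']
  omega

/-- prepend a fixed point -/
def ins0 {q : ℕ} (τ : Equiv.Perm (Fin q)) : Equiv.Perm (Fin (q+1)) where
  toFun i := ⟨if i.val = 0 then 0 else pv τ (i.val - 1) + 1, by
    split
    · omega
    · next h => have := pv_lt τ (show i.val - 1 < q by omega); omega⟩
  invFun i := ⟨if i.val = 0 then 0 else pv τ.symm (i.val - 1) + 1, by
    split
    · omega
    · next h => have := pv_lt τ.symm (show i.val - 1 < q by omega); omega⟩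
  left_inv := by
    intro i
    apply Fin.ext
    simp only
    by_cases h : i.val = 0
    · simp [h]
    · rw [if_neg h, if_neg (by omega : ¬ (pv τ (i.val-1) + 1 = 0)),
        Nat.add_sub_cancel, pv_symm_pv τ (show i.val - 1 < q by omega)]
      omega
  right_inv := by
    intro i
    apply Fin.ext
    simp only
    by_cases h : i.val = 0
    · simp [h]
    · rw [if_neg h, if_neg (by omega : ¬ (pv τ.symm (i.val-1) + 1 = 0)),
        Nat.add_sub_cancel, pv_pv_symm τ (show i.val - 1 < q by omega)]
      omega

variable {a b q : ℕ} (σ : Equiv.Perm (Fin a)) (τ : Equiv.Perm (Fin q))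

lemma pv_ins0_zero : pv (ins0 τ) 0 = 0 := by
  rw [pv_def _ (Nat.succ_pos q)]; rfl

lemma pv_ins0_succ {i : ℕ} (hi : i < q) : pv (ins0 τ) (i+1) = pv τ i + 1 := by
  rw [pv_def _ (by omega : i + 1 < q + 1)]
  show (if i + 1 = 0 then 0 else pv τ (i + 1 - 1) + 1) = pv τ i + 1
  rw [if_neg (by omega), Nat.add_sub_cancel]

lemma invCount_ins0 : invCount (ins0 τ) = invCount τ := by
  rw [invCount_eq, sum_split2]
  have h0 : ∑ j ∈ range (q+1),
      (if 0 < j ∧ pv (ins0 τ) j < pv (ins0 τ) 0 then 1 else 0) = 0 := by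
    apply Finset.sum_eq_zero
    intro j _
    rw [pv_ins0_zero]
    exact if_neg (by omega)
  rw [h0, invCount_eq]
  rw [Nat.zero_add]
  apply Finset.sum_congr rfl
  intro i hi
  rw [mem_range] at hi
  rw [sum_split2]
  have h1 : (if i + 1 < 0 ∧ pv (ins0 τ) 0 < pv (ins0 τ) (i+1) then 1 else 0) = 0 :=
    if_neg (by omega)
  rw [h1, Nat.zero_add]
  apply Finset.sum_congr rfl
  intro j hj
  rw [mem_range] at hj
  rw [pv_ins0_succ τ hi, pv_ins0_succ τ hj]
  exact if_congr (by omega) rfl rfl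

lemma desCount_ins0 : desCount (ins0 τ) = desCount τ := by
  rw [desCount_eq, desCount_eq]
  rcases Nat.eq_zero_or_pos q with h | h
  · subst h; rfl
  obtain ⟨q', rfl⟩ : ∃ q', q = q' + 1 := ⟨q - 1, by omega⟩
  rw [show q' + 1 + 1 - 1 = q' + 1 by omega, sum_split2]
  have h0 : (if pv (ins0 τ) 1 < pv (ins0 τ) 0 then 1 else 0) = 0 := by
    rw [pv_ins0_zero]; exact if_neg (by omega)
  rw [h0, Nat.zero_add, show q' + 1 - 1 = q' by omega]
  apply Finset.sum_congr rfl
  intro i hi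
  rw [mem_range] at hi
  rw [show i + 1 + 1 = (i+1) + 1 by omega, pv_ins0_succ τ (show i + 1 < q' + 1 by omega),
    pv_ins0_succ τ (show i < q' + 1 by omega)]
  exact if_congr (by omega) rfl rfl

lemma fixCount_ins0 : fixCount (ins0 τ) = fixCount τ + 1 := by
  rw [fixCount_eq, fixCount_eq, sum_split2]
  have h0 : (if pv (ins0 τ) 0 = 0 then 1 else 0) = 1 := by
    simp [pv_ins0_zero]
  rw [h0]
  have h1 : ∑ i ∈ range q, (if pv (ins0 τ) (i+1) = i + 1 then 1 else 0)
      = ∑ i ∈ range q, (if pv τ i = i then 1 else 0) := by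
    apply Finset.sum_congr rfl
    intro i hi
    rw [mem_range] at hi
    rw [pv_ins0_succ τ hi]
    exact if_congr (by omega) rfl rfl
  rw [h1]
  omega

lemma isInvolution_ins0 : IsInvolution (ins0 τ) ↔ IsInvolution τ := by
  rw [isInvolution_iff, isInvolution_iff]
  constructor
  · intro h i hi
    have := h (i+1) (by omega)
    rw [pv_ins0_succ τ hi, pv_ins0_succ τ (pv_lt τ hi)] at this
    omega
  · intro h i hi
    rcases Nat.eq_zero_or_pos i with h0 | h0
    · subst h0; rw [pv_ins0_zero, pv_ins0_zero]
    · obtain ⟨i', rfl⟩ : ∃ i', i = i' + 1 := ⟨i - 1, by omega⟩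
      rw [pv_ins0_succ τ (show i' < q by omega),
        pv_ins0_succ τ (pv_lt τ (show i' < q by omega)), h i' (by omega)]

lemma contains3412_ins0 : Contains3412 (ins0 τ) ↔ Contains3412 τ := by
  rw [contains3412_iff, contains3412_iff]
  constructor
  · rintro ⟨i₁, i₂, i₃, i₄, h1, h2, h3, h4, h5, h6, h7⟩
    have hn1 : i₁ ≠ 0 := by
      rintro rfl
      rw [pv_ins0_zero] at h6
      omega
    obtain ⟨a', rfl⟩ : ∃ x, i₁ = x + 1 := ⟨i₁ - 1, by omega⟩
    obtain ⟨b', rfl⟩ : ∃ x, i₂ = x + 1 := ⟨i₂ - 1, by omega⟩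
    obtain ⟨c', rfl⟩ : ∃ x, i₃ = x + 1 := ⟨i₃ - 1, by omega⟩
    obtain ⟨d', rfl⟩ : ∃ x, i₄ = x + 1 := ⟨i₄ - 1, by omega⟩
    rw [pv_ins0_succ τ (show a' < q by omega), pv_ins0_succ τ (show b' < q by omega)] at h7
    rw [pv_ins0_succ τ (show c' < q by omega), pv_ins0_succ τ (show d' < q by omega)] at h5
    rw [pv_ins0_succ τ (show d' < q by omega), pv_ins0_succ τ (show a' < q by omega)] at h6
    exact ⟨a', b', c', d', by omega, by omega, by omega, by omega, by omega, by omega, by omega⟩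
  · rintro ⟨i₁, i₂, i₃, i₄, h1, h2, h3, h4, h5, h6, h7⟩
    refine ⟨i₁+1, i₂+1, i₃+1, i₄+1, by omega, by omega, by omega, by omega, ?_, ?_, ?_⟩ <;>
      rw [pv_ins0_succ τ (show _ < q by omega), pv_ins0_succ τ (show _ < q by omega)] <;>
      omega

end FE3

noncomputable section FE4

open Finset Equiv

variable {a b : ℕ}

/-- wrap `σ` inside the 2-cycle `(0, a+1)` and append `τ` -/
def insWrap (σ : Equiv.Perm (Fin a)) (τ : Equiv.Perm (Fin b)) :
    Equiv.Perm (Fin (a+b+2)) where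
  toFun i := ⟨if i.val = 0 then a+1 else if i.val < a+1 then pv σ (i.val-1)+1
      else if i.val = a+1 then 0 else pv τ (i.val-(a+2)) + (a+2), by
    have hi := i.isLt
    split_ifs with h1 h2 h3
    · omega
    · have := pv_lt σ (show i.val - 1 < a by omega); omega
    · omega
    · have := pv_lt τ (show i.val - (a+2) < b by omega); omega⟩
  invFun i := ⟨if i.val = 0 then a+1 else if i.val < a+1 then pv σ.symm (i.val-1)+1
      else if i.val = a+1 then 0 else pv τ.symm (i.val-(a+2)) + (a+2), by
    have hi := i.isLt
    split_ifs with h1 h2 h3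
    · omega
    · have := pv_lt σ.symm (show i.val - 1 < a by omega); omega
    · omega
    · have := pv_lt τ.symm (show i.val - (a+2) < b by omega); omega⟩
  left_inv := by
    intro i
    have hi := i.isLt
    apply Fin.ext
    simp only
    by_cases h1 : i.val = 0
    · rw [if_pos h1, if_neg (by omega : ¬ (a+1 = 0)), if_neg (by omega : ¬ (a+1 < a+1)),
        if_pos rfl]
      omega
    · rw [if_neg h1]
      by_cases h2 : i.val < a+1
      · have hs : i.val - 1 < a := by omega
        have hpv := pv_lt σ hs
        rw [if_pos h2, if_neg (by omega : ¬ (pv σ (i.val-1)+1 = 0)),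
          if_pos (by omega : pv σ (i.val-1)+1 < a+1),
          Nat.add_sub_cancel, pv_symm_pv σ hs]
        omega
      · rw [if_neg h2]
        by_cases h3 : i.val = a+1
        · rw [if_pos h3, if_pos rfl]
          omega
        · have hs : i.val - (a+2) < b := by omega
          have hpv := pv_lt τ hs
          rw [if_neg h3, if_neg (by omega : ¬ (pv τ (i.val-(a+2)) + (a+2) = 0)),
            if_neg (by omega : ¬ (pv τ (i.val-(a+2)) + (a+2) < a+1)),
            if_neg (by omega : ¬ (pv τ (i.val-(a+2)) + (a+2) = a+1)),
            Nat.add_sub_cancel, pv_symm_pv τ hs]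
          omega
  right_inv := by
    intro i
    have hi := i.isLt
    apply Fin.ext
    simp only
    by_cases h1 : i.val = 0
    · rw [if_pos h1, if_neg (by omega : ¬ (a+1 = 0)), if_neg (by omega : ¬ (a+1 < a+1)),
        if_pos rfl]
      omega
    · rw [if_neg h1]
      by_cases h2 : i.val < a+1
      · have hs : i.val - 1 < a := by omega
        have hpv := pv_lt σ.symm hs
        rw [if_pos h2, if_neg (by omega : ¬ (pv σ.symm (i.val-1)+1 = 0)),
          if_pos (by omega : pv σ.symm (i.val-1)+1 < a+1),
          Nat.add_sub_cancel, pv_pv_symm σ hs]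
        omega
      · rw [if_neg h2]
        by_cases h3 : i.val = a+1
        · rw [if_pos h3, if_pos rfl]
          omega
        · have hs : i.val - (a+2) < b := by omega
          have hpv := pv_lt τ.symm hs
          rw [if_neg h3, if_neg (by omega : ¬ (pv τ.symm (i.val-(a+2)) + (a+2) = 0)),
            if_neg (by omega : ¬ (pv τ.symm (i.val-(a+2)) + (a+2) < a+1)),
            if_neg (by omega : ¬ (pv τ.symm (i.val-(a+2)) + (a+2) = a+1)),
            Nat.add_sub_cancel, pv_pv_symm τ hs]
          omega

variable (σ : Equiv.Perm (Fin a)) (τ : Equiv.Perm (Fin b))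

lemma pv_iw_zero : pv (insWrap σ τ) 0 = a+1 := by
  rw [pv_def _ (by omega : 0 < a+b+2)]; rfl

lemma pv_iw_mid {i : ℕ} (hi : i < a) : pv (insWrap σ τ) (i+1) = pv σ i + 1 := by
  rw [pv_def _ (by omega : i+1 < a+b+2)]
  show (if i+1 = 0 then a+1 else if i+1 < a+1 then pv σ (i+1-1)+1
      else if i+1 = a+1 then 0 else pv τ (i+1-(a+2)) + (a+2)) = pv σ i + 1
  rw [if_neg (by omega), if_pos (by omega), Nat.add_sub_cancel]

lemma pv_iw_top : pv (insWrap σ τ) (a+1) = 0 := by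
  rw [pv_def _ (by omega : a+1 < a+b+2)]
  show (if a+1 = 0 then a+1 else if a+1 < a+1 then pv σ (a+1-1)+1
      else if a+1 = a+1 then 0 else pv τ (a+1-(a+2)) + (a+2)) = 0
  rw [if_neg (by omega), if_neg (by omega), if_pos rfl]

lemma pv_iw_out {i : ℕ} (hi : i < b) : pv (insWrap σ τ) (a+2+i) = pv τ i + (a+2) := by
  rw [pv_def _ (by omega : a+2+i < a+b+2)]
  show (if a+2+i = 0 then a+1 else if a+2+i < a+1 then pv σ (a+2+i-1)+1
      else if a+2+i = a+1 then 0 else pv τ (a+2+i-(a+2)) + (a+2)) = pv τ i + (a+2)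
  rw [if_neg (by omega), if_neg (by omega), if_neg (by omega),
    show a+2+i-(a+2) = i by omega]

end FE4

noncomputable section FE5

open Finset Equiv

variable {a b : ℕ} (σ : Equiv.Perm (Fin a)) (τ : Equiv.Perm (Fin b))

lemma iw_cases {i : ℕ} (h : i < a+b+2) :
    i = 0 ∨ (∃ j < a, i = j+1) ∨ i = a+1 ∨ ∃ j < b, i = a+2+j := by
  by_cases h0 : i = 0
  · exact Or.inl h0
  by_cases h1 : i < a+1
  · exact Or.inr (Or.inl ⟨i-1, by omega, by omega⟩)
  by_cases h2 : i = a+1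
  · exact Or.inr (Or.inr (Or.inl h2))
  · exact Or.inr (Or.inr (Or.inr ⟨i-(a+2), by omega, by omega⟩))

lemma invCount_insWrap :
    invCount (insWrap σ τ) = invCount σ + invCount τ + 2*a + 1 := by
  rw [invCount_eq, sum_split4]
  have H0 : ∑ j ∈ range (a+b+2),
      (if 0 < j ∧ pv (insWrap σ τ) j < pv (insWrap σ τ) 0 then 1 else 0) = a + 1 := by
    rw [sum_split4]
    have t0 : (if (0:ℕ) < 0 ∧ pv (insWrap σ τ) 0 < pv (insWrap σ τ) 0 then 1 else 0) = 0 :=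
      if_neg (by omega)
    have t1 : ∑ j ∈ range a,
        (if 0 < j+1 ∧ pv (insWrap σ τ) (j+1) < pv (insWrap σ τ) 0 then 1 else 0) = a := by
      have he : ∀ j ∈ range a,
          (if 0 < j+1 ∧ pv (insWrap σ τ) (j+1) < pv (insWrap σ τ) 0 then 1 else 0) = 1 := by
        intro j hj
        rw [mem_range] at hj
        have := pv_lt σ hj
        rw [pv_iw_mid σ τ hj, pv_iw_zero]
        exact if_pos ⟨by omega, by omega⟩
      rw [Finset.sum_congr rfl he, Finset.sum_const, smul_eq_mul, mul_one, card_range]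
    have t2 : (if 0 < a+1 ∧ pv (insWrap σ τ) (a+1) < pv (insWrap σ τ) 0 then 1 else 0) = 1 := by
      rw [pv_iw_top, pv_iw_zero]
      exact if_pos ⟨by omega, by omega⟩
    have t3 : ∑ j ∈ range b,
        (if 0 < a+2+j ∧ pv (insWrap σ τ) (a+2+j) < pv (insWrap σ τ) 0 then 1 else 0) = 0 := by
      apply Finset.sum_eq_zero
      intro j hj
      rw [mem_range] at hj
      rw [pv_iw_out σ τ hj, pv_iw_zero]
      exact if_neg (by omega)
    rw [t0, t1, t2, t3]
    omega
  have Hmid : ∑ i ∈ range a, (∑ j ∈ range (a+b+2),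
      (if i+1 < j ∧ pv (insWrap σ τ) j < pv (insWrap σ τ) (i+1) then 1 else 0))
      = invCount σ + a := by
    have he : ∀ i ∈ range a, (∑ j ∈ range (a+b+2),
        (if i+1 < j ∧ pv (insWrap σ τ) j < pv (insWrap σ τ) (i+1) then 1 else 0))
        = (∑ j ∈ range a, if i < j ∧ pv σ j < pv σ i then 1 else 0) + 1 := by
      intro i hi
      rw [mem_range] at hi
      have hio := pv_lt σ hi
      rw [sum_split4]
      have t0 : (if i+1 < 0 ∧ pv (insWrap σ τ) 0 < pv (insWrap σ τ) (i+1) then 1 else 0) = 0 :=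
        if_neg (by omega)
      have t1 : ∑ j ∈ range a,
          (if i+1 < j+1 ∧ pv (insWrap σ τ) (j+1) < pv (insWrap σ τ) (i+1) then 1 else 0)
          = ∑ j ∈ range a, (if i < j ∧ pv σ j < pv σ i then 1 else 0) := by
        apply Finset.sum_congr rfl
        intro j hj
        rw [mem_range] at hj
        rw [pv_iw_mid σ τ hj, pv_iw_mid σ τ hi]
        exact if_congr (by omega) rfl rfl
      have t2 : (if i+1 < a+1 ∧ pv (insWrap σ τ) (a+1) < pv (insWrap σ τ) (i+1)
          then 1 else 0) = 1 := by
        rw [pv_iw_top, pv_iw_mid σ τ hi]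
        exact if_pos ⟨by omega, by omega⟩
      have t3 : ∑ j ∈ range b,
          (if i+1 < a+2+j ∧ pv (insWrap σ τ) (a+2+j) < pv (insWrap σ τ) (i+1)
            then 1 else 0) = 0 := by
        apply Finset.sum_eq_zero
        intro j hj
        rw [mem_range] at hj
        rw [pv_iw_out σ τ hj, pv_iw_mid σ τ hi]
        exact if_neg (by omega)
      rw [t0, t1, t2, t3]
      omega
    rw [Finset.sum_congr rfl he, Finset.sum_add_distrib, Finset.sum_const, smul_eq_mul,
      mul_one, card_range, invCount_eq]
  have Htop : ∑ j ∈ range (a+b+2),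
      (if a+1 < j ∧ pv (insWrap σ τ) j < pv (insWrap σ τ) (a+1) then 1 else 0) = 0 := by
    apply Finset.sum_eq_zero
    intro j _
    rw [pv_iw_top]
    exact if_neg (by omega)
  have Hout : ∑ i ∈ range b, (∑ j ∈ range (a+b+2),
      (if a+2+i < j ∧ pv (insWrap σ τ) j < pv (insWrap σ τ) (a+2+i) then 1 else 0))
      = invCount τ := by
    have he : ∀ i ∈ range b, (∑ j ∈ range (a+b+2),
        (if a+2+i < j ∧ pv (insWrap σ τ) j < pv (insWrap σ τ) (a+2+i) then 1 else 0))
        = ∑ j ∈ range b, (if i < j ∧ pv τ j < pv τ i then 1 else 0) := by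
      intro i hi
      rw [mem_range] at hi
      rw [sum_split4]
      have t0 : (if a+2+i < 0 ∧ pv (insWrap σ τ) 0 < pv (insWrap σ τ) (a+2+i)
          then 1 else 0) = 0 := if_neg (by omega)
      have t1 : ∑ j ∈ range a,
          (if a+2+i < j+1 ∧ pv (insWrap σ τ) (j+1) < pv (insWrap σ τ) (a+2+i)
            then 1 else 0) = 0 := by
        apply Finset.sum_eq_zero
        intro j hj
        rw [mem_range] at hj
        exact if_neg (by omega)
      have t2 : (if a+2+i < a+1 ∧ pv (insWrap σ τ) (a+1) < pv (insWrap σ τ) (a+2+i)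
          then 1 else 0) = 0 := if_neg (by omega)
      have t3 : ∑ j ∈ range b,
          (if a+2+i < a+2+j ∧ pv (insWrap σ τ) (a+2+j) < pv (insWrap σ τ) (a+2+i)
            then 1 else 0) = ∑ j ∈ range b, (if i < j ∧ pv τ j < pv τ i then 1 else 0) := by
        apply Finset.sum_congr rfl
        intro j hj
        rw [mem_range] at hj
        rw [pv_iw_out σ τ hj, pv_iw_out σ τ hi]
        exact if_congr (by omega) rfl rfl
      rw [t0, t1, t2, t3]
      omega
    rw [Finset.sum_congr rfl he, ← invCount_eq]
  rw [H0, Hmid, Htop, Hout]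
  omega

lemma desCount_insWrap :
    desCount (insWrap σ τ) = desCount σ + desCount τ + 1 + (if a = 0 then 0 else 1) := by
  have J1 : (if pv (insWrap σ τ) 1 < pv (insWrap σ τ) 0 then 1 else 0) = 1 := by
    rcases Nat.eq_zero_or_pos a with ha | ha
    · subst ha
      rw [pv_iw_zero, show (1:ℕ) = 0 + 1 by rfl, pv_iw_top σ τ]
      exact if_pos (by omega)
    · have h0 : (0:ℕ) < a := ha
      have := pv_lt σ h0
      rw [pv_iw_zero, show (1:ℕ) = 0 + 1 by rfl, pv_iw_mid σ τ h0]
      exact if_pos (by omega)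
  have J2 : ∑ i ∈ range a,
      (if pv (insWrap σ τ) (i+1+1) < pv (insWrap σ τ) (i+1) then 1 else 0)
      = desCount σ + (if a = 0 then 0 else 1) := by
    rcases Nat.eq_zero_or_pos a with ha | ha
    · subst ha
      rw [desCount_eq]
      simp
    obtain ⟨a', rfl⟩ : ∃ a', a = a' + 1 := ⟨a - 1, by omega⟩
    rw [Finset.sum_range_succ]
    have tl : (if pv (insWrap σ τ) (a'+1+1) < pv (insWrap σ τ) (a'+1) then 1 else 0) = 1 := by
      rw [show a'+1+1 = (a'+1)+1 by rfl, pv_iw_top σ τ, pv_iw_mid σ τ (by omega : a' < a'+1)]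
      exact if_pos (by omega)
    have tm : ∑ i ∈ range a',
        (if pv (insWrap σ τ) (i+1+1) < pv (insWrap σ τ) (i+1) then 1 else 0)
        = desCount σ := by
      rw [desCount_eq, show a'+1-1 = a' by omega]
      apply Finset.sum_congr rfl
      intro i hi
      rw [mem_range] at hi
      rw [pv_iw_mid σ τ (show i+1 < a'+1 by omega), pv_iw_mid σ τ (show i < a'+1 by omega)]
      exact if_congr (by omega) rfl rfl
    rw [tl, tm, if_neg (by omega : ¬ (a'+1 = 0))]
  rw [desCount_eq]
  rcases Nat.eq_zero_or_pos b with hb | hb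
  · subst hb
    have hdt : desCount τ = 0 := by rw [desCount_eq]; simp
    rw [show a+0+2-1 = a+1 by omega, sum_split2, Nat.zero_add, J1, J2, hdt]
    omega
  obtain ⟨b', rfl⟩ : ∃ b', b = b' + 1 := ⟨b - 1, by omega⟩
  rw [show a+(b'+1)+2-1 = a+b'+2 by omega, sum_split4, Nat.zero_add, J1, J2]
  have t2 : (if pv (insWrap σ τ) (a+1+1) < pv (insWrap σ τ) (a+1) then 1 else 0) = 0 := by
    rw [pv_iw_top]
    exact if_neg (by omega)
  have t3 : ∑ i ∈ range b',
      (if pv (insWrap σ τ) (a+2+i+1) < pv (insWrap σ τ) (a+2+i) then 1 else 0)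
      = desCount τ := by
    rw [desCount_eq, show b'+1-1 = b' by omega]
    apply Finset.sum_congr rfl
    intro i hi
    rw [mem_range] at hi
    rw [show a+2+i+1 = a+2+(i+1) by omega, pv_iw_out σ τ (show i+1 < b'+1 by omega),
      pv_iw_out σ τ (show i < b'+1 by omega)]
    exact if_congr (by omega) rfl rfl
  rw [t2, t3]
  omega

lemma fixCount_insWrap : fixCount (insWrap σ τ) = fixCount σ + fixCount τ := by
  rw [fixCount_eq, sum_split4]
  have t0 : (if pv (insWrap σ τ) 0 = 0 then 1 else 0) = 0 := by
    rw [pv_iw_zero]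
    exact if_neg (by omega)
  have t1 : ∑ i ∈ range a, (if pv (insWrap σ τ) (i+1) = i+1 then 1 else 0) = fixCount σ := by
    rw [fixCount_eq]
    apply Finset.sum_congr rfl
    intro i hi
    rw [mem_range] at hi
    rw [pv_iw_mid σ τ hi]
    exact if_congr (by omega) rfl rfl
  have t2 : (if pv (insWrap σ τ) (a+1) = a+1 then 1 else 0) = 0 := by
    rw [pv_iw_top]
    exact if_neg (by omega)
  have t3 : ∑ i ∈ range b, (if pv (insWrap σ τ) (a+2+i) = a+2+i then 1 else 0)
      = fixCount τ := by
    rw [fixCount_eq]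
    apply Finset.sum_congr rfl
    intro i hi
    rw [mem_range] at hi
    rw [pv_iw_out σ τ hi]
    exact if_congr (by omega) rfl rfl
  rw [t0, t1, t2, t3]
  omega

lemma isInvolution_insWrap :
    IsInvolution (insWrap σ τ) ↔ IsInvolution σ ∧ IsInvolution τ := by
  rw [isInvolution_iff, isInvolution_iff, isInvolution_iff]
  constructor
  · intro h
    constructor
    · intro i hi
      have hs := pv_lt σ hi
      have := h (i+1) (by omega)
      rw [pv_iw_mid σ τ hi, pv_iw_mid σ τ hs] at this
      omega
    · intro i hi
      have hs := pv_lt τ hi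
      have := h (a+2+i) (by omega)
      rw [pv_iw_out σ τ hi, show pv τ i + (a+2) = a+2+(pv τ i) by omega,
        pv_iw_out σ τ hs] at this
      omega
  · rintro ⟨hσ, hτ⟩ i hi
    rcases iw_cases (a := a) (b := b) hi with h0 | ⟨j, hj, rfl⟩ | h0 | ⟨j, hj, rfl⟩
    · subst h0
      rw [pv_iw_zero, pv_iw_top]
    · have hs := pv_lt σ hj
      rw [pv_iw_mid σ τ hj, pv_iw_mid σ τ hs, hσ j hj]
    · subst h0
      rw [pv_iw_top, pv_iw_zero]
    · have hs := pv_lt τ hj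
      rw [pv_iw_out σ τ hj, show pv τ j + (a+2) = a+2+(pv τ j) by omega,
        pv_iw_out σ τ hs, hτ j hj]
      omega

lemma contains3412_insWrap :
    Contains3412 (insWrap σ τ) ↔ Contains3412 σ ∨ Contains3412 τ := by
  rw [contains3412_iff]
  constructor
  · rintro ⟨i₁, i₂, i₃, i₄, h1, h2, h3, h4, h5, h6, h7⟩
    rcases iw_cases (a := a) (b := b) (show i₁ < a+b+2 by omega)
      with hc | ⟨j₁, hj₁, rfl⟩ | hc | ⟨j₁, hj₁, rfl⟩
    · -- i₁ = 0 : impossible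
      exfalso
      subst hc
      rw [pv_iw_zero] at h6 h7
      -- i₂ must be in the tail block
      rcases iw_cases (a := a) (b := b) (show i₂ < a+b+2 by omega)
        with hc2 | ⟨j₂, hj₂, rfl⟩ | hc2 | ⟨j₂, hj₂, rfl⟩
      · omega
      · rw [pv_iw_mid σ τ hj₂] at h7
        have := pv_lt σ hj₂
        omega
      · subst hc2
        rw [pv_iw_top] at h7
        omega
      · -- then i₄ is also in the tail block, pv i₄ ≥ a+2 > a+1
        have h4' : ∃ j₄ < b, i₄ = a+2+j₄ := by
          rcases iw_cases (a := a) (b := b) (show i₄ < a+b+2 by omega)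
            with hc4 | ⟨j₄, hj₄, rfl⟩ | hc4 | ⟨j₄, hj₄, rfl⟩
          · omega
          · omega
          · omega
          · exact ⟨j₄, hj₄, rfl⟩
        obtain ⟨j₄, hj₄, rfl⟩ := h4'
        rw [pv_iw_out σ τ hj₄] at h6
        omega
    · -- i₁ in the middle block: whole pattern in σ
      left
      rw [contains3412_iff]
      rw [pv_iw_mid σ τ hj₁] at h6 h7
      have hσ₁ := pv_lt σ hj₁
      have h4' : ∃ j₄ < a, i₄ = j₄+1 := by
        rcases iw_cases (a := a) (b := b) (show i₄ < a+b+2 by omega)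
          with hc4 | ⟨j₄, hj₄, rfl⟩ | hc4 | ⟨j₄, hj₄, rfl⟩
        · omega
        · exact ⟨j₄, hj₄, rfl⟩
        · subst hc4
          rw [pv_iw_top] at h5
          omega
        · rw [pv_iw_out σ τ hj₄] at h6
          omega
      obtain ⟨j₄, hj₄, rfl⟩ := h4'
      rw [pv_iw_mid σ τ hj₄] at h5 h6
      obtain ⟨j₂, hj₂, rfl⟩ : ∃ j₂ < a, i₂ = j₂+1 := ⟨i₂ - 1, by omega, by omega⟩
      obtain ⟨j₃, hj₃, rfl⟩ : ∃ j₃ < a, i₃ = j₃+1 := ⟨i₃ - 1, by omega, by omega⟩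
      rw [pv_iw_mid σ τ hj₂] at h7
      rw [pv_iw_mid σ τ hj₃] at h5
      exact ⟨j₁, j₂, j₃, j₄, by omega, by omega, by omega, by omega, by omega,
        by omega, by omega⟩
    · exfalso
      subst hc
      rw [pv_iw_top] at h6
      omega
    · -- i₁ in the tail block: whole pattern in τ
      right
      rw [contains3412_iff]
      obtain ⟨j₂, hj₂, rfl⟩ : ∃ j₂ < b, i₂ = a+2+j₂ := ⟨i₂ - (a+2), by omega, by omega⟩
      obtain ⟨j₃, hj₃, rfl⟩ : ∃ j₃ < b, i₃ = a+2+j₃ := ⟨i₃ - (a+2), by omega, by omega⟩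
      obtain ⟨j₄, hj₄, rfl⟩ : ∃ j₄ < b, i₄ = a+2+j₄ := ⟨i₄ - (a+2), by omega, by omega⟩
      rw [pv_iw_out σ τ hj₁, pv_iw_out σ τ hj₂] at h7
      rw [pv_iw_out σ τ hj₃, pv_iw_out σ τ hj₄] at h5
      rw [pv_iw_out σ τ hj₄, pv_iw_out σ τ hj₁] at h6
      exact ⟨j₁, j₂, j₃, j₄, by omega, by omega, by omega, by omega, by omega,
        by omega, by omega⟩
  · intro h
    rcases h with h | h
    · rw [contains3412_iff] at h
      obtain ⟨i₁, i₂, i₃, i₄, h1, h2, h3, h4, h5, h6, h7⟩ := h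
      refine ⟨i₁+1, i₂+1, i₃+1, i₄+1, by omega, by omega, by omega, by omega, ?_, ?_, ?_⟩ <;>
        rw [pv_iw_mid σ τ (show _ < a by omega), pv_iw_mid σ τ (show _ < a by omega)] <;>
        omega
    · rw [contains3412_iff] at h
      obtain ⟨i₁, i₂, i₃, i₄, h1, h2, h3, h4, h5, h6, h7⟩ := h
      refine ⟨a+2+i₁, a+2+i₂, a+2+i₃, a+2+i₄, by omega, by omega, by omega, by omega,
        ?_, ?_, ?_⟩ <;>
        rw [pv_iw_out σ τ (show _ < b by omega), pv_iw_out σ τ (show _ < b by omega)] <;>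
        omega

end FE5

noncomputable section FE6

open Finset Equiv

variable {n a b q : ℕ}

lemma perm0_invCount (σ : Equiv.Perm (Fin 0)) : invCount σ = 0 := by
  rw [invCount_eq]; simp

lemma perm0_desCount (σ : Equiv.Perm (Fin 0)) : desCount σ = 0 := by
  rw [desCount_eq]; simp

lemma perm0_fixCount (σ : Equiv.Perm (Fin 0)) : fixCount σ = 0 := by
  rw [fixCount_eq]; simp

lemma perm0_inv (σ : Equiv.Perm (Fin 0)) : IsInvolution σ := by
  rw [isInvolution_iff]; omega

lemma perm0_avoid (σ : Equiv.Perm (Fin 0)) : ¬ Contains3412 σ := by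
  rw [contains3412_iff]
  rintro ⟨_, _, _, _, _, _, _, h, -⟩
  omega

/-- the main closure property of 3412-avoiding involutions -/
lemma blockClosure {π : Equiv.Perm (Fin n)} (hI : IsInvolution π) (hA : ¬ Contains3412 π)
    (hn : 0 < n) {i : ℕ} (hi : i < n) : i ≤ pv π 0 ↔ pv π i ≤ pv π 0 := by
  have hinv := (isInvolution_iff π).mp hI
  have hk : pv π 0 < n := pv_lt π hn
  have hpk : pv π (pv π 0) = 0 := hinv 0 hn
  have M : ∀ j, 0 < j → j < pv π 0 → pv π j < pv π 0 := by
    intro j h0 hj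
    by_contra hcon
    push_neg at hcon
    have hne : pv π j ≠ pv π 0 := fun he => by
      have := pv_inj π (by omega) hn he
      omega
    have hlt : pv π j < n := pv_lt π (by omega)
    have hjj : pv π (pv π j) = j := hinv j (by omega)
    apply hA
    rw [contains3412_iff]
    refine ⟨0, j, pv π 0, pv π j, h0, hj, by omega, hlt, ?_, ?_, ?_⟩
    · rw [hpk, hjj]; omega
    · rw [hjj]; omega
    · omega
  constructor
  · intro h
    rcases Nat.eq_zero_or_pos i with h0 | h0
    · subst h0; omega
    rcases eq_or_ne i (pv π 0) with he | he
    · subst he; omega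
    · have := M i h0 (by omega)
      omega
  · intro h
    have hji : pv π i < n := pv_lt π hi
    have hii : pv π (pv π i) = i := hinv i hi
    -- apply forward direction to j := pv π i
    rcases Nat.eq_zero_or_pos (pv π i) with h0 | h0
    · -- pv π i = 0, so i = pv π 0
      rw [h0] at hii
      rw [hpk] at *
      omega
    rcases eq_or_ne (pv π i) (pv π 0) with he | he
    · have := pv_inj π hi hn he; omega
    · have := M (pv π i) h0 (by omega)
      rw [hii] at this
      omega

/-- derived window closures -/
lemma windows {π : Equiv.Perm (Fin n)} (hI : IsInvolution π) (hA : ¬ Contains3412 π)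
    (h : a + b + 2 = n) (hk : pv π 0 = a + 1) :
    pv π (a+1) = 0 ∧
    (∀ i < n, (1 ≤ i ∧ i < 1 + a) ↔ (1 ≤ pv π i ∧ pv π i < 1 + a)) ∧
    (∀ i < n, (a+2 ≤ i ∧ i < (a+2) + b) ↔ (a+2 ≤ pv π i ∧ pv π i < (a+2) + b)) := by
  have hn : 0 < n := by omega
  have hinv := (isInvolution_iff π).mp hI
  have hpk : pv π (a+1) = 0 := by
    have := hinv 0 hn
    rw [hk] at this
    exact this
  have hcls : ∀ i < n, i ≤ a+1 ↔ pv π i ≤ a+1 := by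
    intro i hi
    have := blockClosure hI hA hn hi
    rw [hk] at this
    exact this
  refine ⟨hpk, ?_, ?_⟩
  · intro i hi
    constructor
    · rintro ⟨h1, h2⟩
      have hle : pv π i ≤ a+1 := (hcls i hi).mp (by omega)
      have hne1 : pv π i ≠ a+1 := by
        intro he
        rw [← hk] at he
        have := pv_inj π hi hn he
        omega
      have hne0 : pv π i ≠ 0 := by
        intro he
        rw [← hpk] at he
        have := pv_inj π hi (by omega) he
        omega
      omega
    · rintro ⟨h1, h2⟩
      have hle : i ≤ a+1 := (hcls i hi).mpr (by omega)
      have hne0 : i ≠ 0 := by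
        intro he
        subst he
        rw [hk] at h2
        omega
      have hne1 : i ≠ a+1 := by
        intro he
        subst he
        rw [hpk] at h1
        omega
      omega
  · intro i hi
    have hpl := pv_lt π hi
    constructor
    · rintro ⟨h1, h2⟩
      have hnp : ¬ (pv π i ≤ a+1) := fun hc => (by omega : ¬ i ≤ a+1) ((hcls i hi).mpr hc)
      omega
    · rintro ⟨h1, h2⟩
      have hnp : ¬ (i ≤ a+1) := fun hc => (by omega : ¬ pv π i ≤ a+1) ((hcls i hi).mp hc)
      omega

/-- reconstruction: a permutation fixing `0` is `ins0` of its chop -/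
lemma struct0 (π : Equiv.Perm (Fin n)) (h1 : 1 ≤ n) (h0 : pv π 0 = 0)
    (hcl : ∀ i < n, (1 ≤ i ∧ i < 1 + (n-1)) ↔ (1 ≤ pv π i ∧ pv π i < 1 + (n-1))) :
    permCast (show (n-1)+1 = n by omega) (ins0 (chop π 1 (n-1) (by omega) hcl)) = π := by
  apply pv_ext
  intro i hi
  rw [pv_permCast]
  rcases Nat.eq_zero_or_pos i with hz | hz
  · subst hz
    rw [pv_ins0_zero, h0]
  · obtain ⟨i', rfl⟩ : ∃ i', i = i' + 1 := ⟨i - 1, by omega⟩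
    have hi' : i' < n - 1 := by omega
    rw [pv_ins0_succ _ hi', pv_chop π 1 (n-1) (by omega) hcl hi']
    have hb := pv_chop_ge π 1 (n-1) (by omega) hcl hi'
    rw [show 1 + i' = i' + 1 by omega] at hb ⊢
    omega

/-- reconstruction: general wrap structure -/
lemma structW (π : Equiv.Perm (Fin n)) (h : a + b + 2 = n) (hk : pv π 0 = a + 1)
    (hpk : pv π (a+1) = 0)
    (hcl1 : ∀ i < n, (1 ≤ i ∧ i < 1 + a) ↔ (1 ≤ pv π i ∧ pv π i < 1 + a))
    (hcl2 : ∀ i < n, (a+2 ≤ i ∧ i < (a+2) + b) ↔ (a+2 ≤ pv π i ∧ pv π i < (a+2) + b)) :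
    permCast h (insWrap (chop π 1 a (by omega) hcl1) (chop π (a+2) b (by omega) hcl2)) = π := by
  apply pv_ext
  intro i hi
  rw [pv_permCast]
  rcases iw_cases (a := a) (b := b) (show i < a+b+2 by omega)
    with hz | ⟨j, hj, rfl⟩ | hz | ⟨j, hj, rfl⟩
  · subst hz
    rw [pv_iw_zero, hk]
  · rw [pv_iw_mid _ _ hj, pv_chop π 1 a (by omega) hcl1 hj]
    have hb := pv_chop_ge π 1 a (by omega) hcl1 hj
    rw [show 1 + j = j + 1 by omega] at hb ⊢
    omega
  · subst hz
    rw [pv_iw_top, hpk]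
  · rw [pv_iw_out _ _ hj, pv_chop π (a+2) b (by omega) hcl2 hj]
    have hb := pv_chop_ge π (a+2) b (by omega) hcl2 hj
    rw [show a+2+j = (a+2)+j by omega] at hb ⊢
    omega

/-- chops of an assembled permutation recover the pieces -/
lemma chop_cast_ins0 (τ : Equiv.Perm (Fin q)) (h : q + 1 = n)
    (hlw : 1 + q ≤ n)
    (hcl : ∀ i < n, (1 ≤ i ∧ i < 1 + q) ↔
      (1 ≤ pv (permCast h (ins0 τ)) i ∧ pv (permCast h (ins0 τ)) i < 1 + q)) :
    chop (permCast h (ins0 τ)) 1 q hlw hcl = τ := by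
  apply pv_ext
  intro i hi
  rw [pv_chop _ 1 q hlw hcl hi, pv_permCast, show 1 + i = i + 1 by omega,
    pv_ins0_succ τ hi]
  omega

lemma chop_cast_iw_left (σ : Equiv.Perm (Fin a)) (τ : Equiv.Perm (Fin b))
    (h : a + b + 2 = n) (hlw : 1 + a ≤ n)
    (hcl : ∀ i < n, (1 ≤ i ∧ i < 1 + a) ↔
      (1 ≤ pv (permCast h (insWrap σ τ)) i ∧ pv (permCast h (insWrap σ τ)) i < 1 + a)) :
    chop (permCast h (insWrap σ τ)) 1 a hlw hcl = σ := by
  apply pv_ext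
  intro i hi
  rw [pv_chop _ 1 a hlw hcl hi, pv_permCast, show 1 + i = i + 1 by omega,
    pv_iw_mid σ τ hi]
  omega

lemma chop_cast_iw_right (σ : Equiv.Perm (Fin a)) (τ : Equiv.Perm (Fin b))
    (h : a + b + 2 = n) (hlw : (a+2) + b ≤ n)
    (hcl : ∀ i < n, ((a+2) ≤ i ∧ i < (a+2) + b) ↔
      (a+2 ≤ pv (permCast h (insWrap σ τ)) i ∧ pv (permCast h (insWrap σ τ)) i < (a+2) + b)) :
    chop (permCast h (insWrap σ τ)) (a+2) b hlw hcl = τ := by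
  apply pv_ext
  intro i hi
  rw [pv_chop _ (a+2) b hlw hcl hi, pv_permCast, show (a+2) + i = a+2+i by omega,
    pv_iw_out σ τ hi]
  omega

/-- total version of `chop` -/
def chopT (π : Equiv.Perm (Fin n)) (l w : ℕ) : Equiv.Perm (Fin w) :=
  if h : l + w ≤ n ∧ ∀ i < n, (l ≤ i ∧ i < l + w) ↔ (l ≤ pv π i ∧ pv π i < l + w)
  then chop π l w h.1 h.2 else 1

lemma chopT_eq (π : Equiv.Perm (Fin n)) (l w : ℕ) (h1 : l + w ≤ n)
    (h2 : ∀ i < n, (l ≤ i ∧ i < l + w) ↔ (l ≤ pv π i ∧ pv π i < l + w)) :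
    chopT π l w = chop π l w h1 h2 := dif_pos ⟨h1, h2⟩

end FE6

noncomputable section FE7

open Finset Equiv

def IF (n b c d : ℕ) : Finset (Equiv.Perm (Fin n)) :=
  univ.filter fun π => IsInvolution π ∧ ¬ Contains3412 π ∧
    invCount π = b ∧ desCount π = c ∧ fixCount π = d

def IFsub (n b c d : ℕ) : Finset (Equiv.Perm (Fin n)) :=
  univ.filter fun σ => IsInvolution σ ∧ ¬ Contains3412 σ ∧
    invCount σ + 2*n = b ∧ desCount σ = c ∧ fixCount σ = d

lemma mem_IF {n b c d : ℕ} {π : Equiv.Perm (Fin n)} :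
    π ∈ IF n b c d ↔ IsInvolution π ∧ ¬ Contains3412 π ∧
      invCount π = b ∧ desCount π = c ∧ fixCount π = d := by
  rw [IF, mem_filter]
  simp

lemma mem_IFsub {n b c d : ℕ} {σ : Equiv.Perm (Fin n)} :
    σ ∈ IFsub n b c d ↔ IsInvolution σ ∧ ¬ Contains3412 σ ∧
      invCount σ + 2*n = b ∧ desCount σ = c ∧ fixCount σ = d := by
  rw [IFsub, mem_filter]
  simp

def mk4 (a b c d : ℕ) : Fin 4 →₀ ℕ := Finsupp.equivFunOnFinite.symm ![a, b, c, d]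

lemma mk4_0 (a b c d : ℕ) : mk4 a b c d 0 = a := rfl
lemma mk4_1 (a b c d : ℕ) : mk4 a b c d 1 = b := rfl
lemma mk4_2 (a b c d : ℕ) : mk4 a b c d 2 = c := rfl
lemma mk4_3 (a b c d : ℕ) : mk4 a b c d 3 = d := rfl

lemma mk4_eta (m : Fin 4 →₀ ℕ) : mk4 (m 0) (m 1) (m 2) (m 3) = m := by
  ext i
  fin_cases i <;> rfl

def Bp (p : Fin 4 →₀ ℕ) : Finset (Equiv.Perm (Fin (p 0))) :=
  if p 0 = 0 then ∅ else IFsub (p 0) (p 1) (p 2) (p 3)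

def fstats {n : ℕ} (π : Equiv.Perm (Fin n)) : Fin 4 →₀ ℕ :=
  mk4 (pv π 0 - 1) (winInv π 1 (pv π 0 - 1) + 2*(pv π 0 - 1))
    (winDes π 1 (pv π 0 - 1)) (winFix π 1 (pv π 0 - 1))

def sstats {n : ℕ} (π : Equiv.Perm (Fin n)) : Fin 4 →₀ ℕ :=
  mk4 (n - pv π 0 - 1) (winInv π (pv π 0 + 1) (n - pv π 0 - 1))
    (winDes π (pv π 0 + 1) (n - pv π 0 - 1)) (winFix π (pv π 0 + 1) (n - pv π 0 - 1))

lemma IF_zero (b c d : ℕ) :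
    (IF 0 b c d).card = if b = 0 ∧ c = 0 ∧ d = 0 then 1 else 0 := by
  by_cases h : b = 0 ∧ c = 0 ∧ d = 0
  · rw [if_pos h]
    obtain ⟨rfl, rfl, rfl⟩ := h
    rw [Finset.card_eq_one]
    refine ⟨1, ?_⟩
    apply Finset.eq_singleton_iff_unique_mem.mpr
    constructor
    · rw [mem_IF]
      exact ⟨perm0_inv 1, perm0_avoid 1, by rw [perm0_invCount], by rw [perm0_desCount],
        by rw [perm0_fixCount]⟩
    · intro σ _
      apply pv_ext
      intro i hi
      omega
  · rw [if_neg h, Finset.card_eq_zero, Finset.eq_empty_iff_forall_notMem]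
    intro σ hσ
    rw [mem_IF] at hσ
    obtain ⟨-, -, h1, h2, h3⟩ := hσ
    rw [perm0_invCount] at h1
    rw [perm0_desCount] at h2
    rw [perm0_fixCount] at h3
    exact h ⟨h1.symm, h2.symm, h3.symm⟩

/-- the window closure for a permutation fixing `0` -/
lemma hcl0 {n : ℕ} (π : Equiv.Perm (Fin n)) (h0 : pv π 0 = 0) :
    ∀ i < n, (1 ≤ i ∧ i < 1 + (n-1)) ↔ (1 ≤ pv π i ∧ pv π i < 1 + (n-1)) := by
  intro i hi
  have hl := pv_lt π hi
  constructor
  · rintro ⟨h1, _⟩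
    refine ⟨?_, by omega⟩
    rcases Nat.eq_zero_or_pos (pv π i) with hz | hz
    · have := pv_inj π (i := i) (j := 0) hi (by omega) (by rw [hz, h0])
      omega
    · omega
  · rintro ⟨h1, _⟩
    refine ⟨?_, by omega⟩
    rcases Nat.eq_zero_or_pos i with hz | hz
    · subst hz
      omega
    · omega

lemma countC0 {n b c d : ℕ} (hn : 1 ≤ n) :
    ((IF n b c d).filter fun π => pv π 0 = 0).card
      = if 1 ≤ d then (IF (n-1) b c (d-1)).card else 0 := by
  rcases Nat.lt_or_ge d 1 with hd | hd
  · rw [if_neg (by omega), Finset.card_eq_zero, Finset.filter_eq_empty_iff]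
    intro π hπ
    rw [mem_IF] at hπ
    obtain ⟨-, -, -, -, hf⟩ := hπ
    intro h0
    have hmem : (⟨0, by omega⟩ : Fin n) ∈ univ.filter fun i : Fin n => π i = i := by
      rw [mem_filter]
      refine ⟨mem_univ _, Fin.ext ?_⟩
      rw [pv_def π (show (0:ℕ) < n by omega)] at h0
      exact h0
    have : 0 < fixCount π := Finset.card_pos.mpr ⟨_, hmem⟩
    omega
  · rw [if_pos hd]
    refine Finset.card_bij' (fun π _ => chopT π 1 (n-1))
      (fun τ _ => permCast (show (n-1)+1 = n by omega) (ins0 τ)) ?hi ?hj ?li ?ri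
    case hi =>
      intro π hπ
      beta_reduce
      rw [mem_filter] at hπ
      obtain ⟨hIF, h0⟩ := hπ
      rw [mem_IF] at hIF
      obtain ⟨hI, hA, hb, hc, hf⟩ := hIF
      have hcl := hcl0 π h0
      rw [chopT_eq π 1 (n-1) (by omega) hcl]
      have hrt := struct0 π hn h0 hcl
      rw [← hrt] at hI hA hb hc hf
      rw [invCount_permCast, invCount_ins0] at hb
      rw [desCount_permCast, desCount_ins0] at hc
      rw [fixCount_permCast, fixCount_ins0] at hf
      rw [isInvolution_permCast, isInvolution_ins0] at hI
      rw [contains3412_permCast, contains3412_ins0] at hA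
      rw [mem_IF]
      exact ⟨hI, hA, hb, hc, by omega⟩
    case hj =>
      intro τ hτ
      beta_reduce
      rw [mem_IF] at hτ
      obtain ⟨hI, hA, hb, hc, hf⟩ := hτ
      rw [mem_filter]
      constructor
      · rw [mem_IF, invCount_permCast, invCount_ins0, desCount_permCast, desCount_ins0,
          fixCount_permCast, fixCount_ins0, isInvolution_permCast, isInvolution_ins0,
          contains3412_permCast, contains3412_ins0]
        exact ⟨hI, hA, hb, hc, by omega⟩
      · rw [pv_permCast, pv_ins0_zero]
    case li =>
      intro π hπ
      beta_reduce
      rw [mem_filter] at hπ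
      obtain ⟨-, h0⟩ := hπ
      rw [chopT_eq π 1 (n-1) (by omega) (hcl0 π h0)]
      exact struct0 π hn h0 (hcl0 π h0)
    case ri =>
      intro τ hτ
      beta_reduce
      have h0 : pv (permCast (show (n-1)+1 = n by omega) (ins0 τ)) 0 = 0 := by
        rw [pv_permCast, pv_ins0_zero]
      rw [chopT_eq _ 1 (n-1) (by omega) (hcl0 _ h0)]
      exact chop_cast_ins0 τ _ _ _

end FE7

noncomputable section FE8

open Finset Equiv

lemma countC1 {n b c d : ℕ} (hn : 1 ≤ n) :
    ((IF n b c d).filter fun π => pv π 0 = 1).card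
      = if 2 ≤ n ∧ 1 ≤ b ∧ 1 ≤ c then (IF (n-2) (b-1) (c-1) d).card else 0 := by
  by_cases hcond : 2 ≤ n ∧ 1 ≤ b ∧ 1 ≤ c
  swap
  · rw [if_neg hcond, Finset.card_eq_zero, Finset.filter_eq_empty_iff]
    intro π hπ
    rw [mem_IF] at hπ
    obtain ⟨hI, hA, hb, hc, hf⟩ := hπ
    intro h0
    have hn2 : 2 ≤ n := by
      have := pv_lt π (show 0 < n by omega)
      omega
    have hp1 : pv π 1 = 0 := by
      have := (isInvolution_iff π).mp hI 0 (by omega)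
      rw [h0] at this
      exact this
    have hbge : 0 < invCount π := by
      apply Finset.card_pos.mpr
      refine ⟨(⟨0, by omega⟩, ⟨1, by omega⟩), ?_⟩
      rw [mem_filter]
      refine ⟨mem_univ _, ?_⟩
      show (⟨0, by omega⟩ : Fin n) < ⟨1, by omega⟩ ∧ π ⟨1, by omega⟩ < π ⟨0, by omega⟩
      constructor
      · rw [Fin.mk_lt_mk]
        omega
      · rw [Fin.lt_def]
        have e1 : pv π 1 = ((π ⟨1, by omega⟩ : Fin n) : ℕ) := pv_def π (by omega)
        have e0 : pv π 0 = ((π ⟨0, by omega⟩ : Fin n) : ℕ) := pv_def π (by omega)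
        omega
    have hcge : 0 < desCount π := by
      apply Finset.card_pos.mpr
      refine ⟨0, ?_⟩
      rw [mem_filter, mem_range]
      refine ⟨by omega, ?_⟩
      show pv π (0+1) < pv π 0
      rw [show (0:ℕ)+1 = 1 by rfl]
      omega
    exact hcond ⟨hn2, by omega, by omega⟩
  obtain ⟨hn2, hb, hc⟩ := hcond
  rw [if_pos ⟨hn2, hb, hc⟩]
  have hEq : (0:ℕ) + (n-2) + 2 = n := by omega
  refine Finset.card_bij' (fun π _ => chopT π (0+2) (n-2))
    (fun τ _ => permCast hEq (insWrap (1 : Equiv.Perm (Fin 0)) τ)) ?hi ?hj ?li ?ri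
  case hi =>
    intro π hπ
    beta_reduce
    rw [mem_filter, mem_IF] at hπ
    obtain ⟨⟨hI, hA, hb', hc', hf⟩, h0⟩ := hπ
    obtain ⟨hpk, hcl1, hcl2⟩ := windows hI hA hEq (show pv π 0 = 0 + 1 from h0)
    rw [chopT_eq π (0+2) (n-2) (by omega) hcl2]
    have hrt := structW π hEq (show pv π 0 = 0 + 1 from h0) hpk hcl1 hcl2
    rw [← hrt] at hI hA hb' hc' hf
    rw [invCount_permCast, invCount_insWrap] at hb'
    rw [desCount_permCast, desCount_insWrap] at hc'
    rw [fixCount_permCast, fixCount_insWrap] at hf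
    rw [isInvolution_permCast, isInvolution_insWrap] at hI
    rw [contains3412_permCast, contains3412_insWrap] at hA
    rw [perm0_invCount] at hb'
    rw [perm0_desCount, if_pos rfl] at hc'
    rw [perm0_fixCount] at hf
    rw [mem_IF]
    exact ⟨hI.2, fun hC => hA (Or.inr hC), by omega, by omega, by omega⟩
  case hj =>
    intro τ hτ
    beta_reduce
    rw [mem_IF] at hτ
    obtain ⟨hI, hA, hb', hc', hf⟩ := hτ
    rw [mem_filter]
    constructor
    · rw [mem_IF, invCount_permCast, invCount_insWrap, desCount_permCast, desCount_insWrap,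
        fixCount_permCast, fixCount_insWrap, isInvolution_permCast, isInvolution_insWrap,
        contains3412_permCast, contains3412_insWrap, perm0_invCount, perm0_desCount,
        perm0_fixCount, if_pos rfl]
      refine ⟨⟨perm0_inv _, hI⟩, ?_, by omega, by omega, by omega⟩
      rintro (hC | hC)
      · exact perm0_avoid _ hC
      · exact hA hC
    · rw [pv_permCast, pv_iw_zero]
  case li =>
    intro π hπ
    beta_reduce
    rw [mem_filter, mem_IF] at hπ
    obtain ⟨⟨hI, hA, -, -, -⟩, h0⟩ := hπ
    obtain ⟨hpk, hcl1, hcl2⟩ := windows hI hA hEq (show pv π 0 = 0 + 1 from h0)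
    rw [chopT_eq π (0+2) (n-2) (by omega) hcl2]
    rw [show (1 : Equiv.Perm (Fin 0)) = chop π 1 0 (by omega) hcl1 from
      Subsingleton.elim _ _]
    exact structW π hEq (show pv π 0 = 0 + 1 from h0) hpk hcl1 hcl2
  case ri =>
    intro τ hτ
    beta_reduce
    rw [mem_IF] at hτ
    obtain ⟨hI, hA, -, -, -⟩ := hτ
    have hIP : IsInvolution (permCast hEq (insWrap (1 : Equiv.Perm (Fin 0)) τ)) := by
      rw [isInvolution_permCast, isInvolution_insWrap]
      exact ⟨perm0_inv _, hI⟩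
    have hAP : ¬ Contains3412 (permCast hEq (insWrap (1 : Equiv.Perm (Fin 0)) τ)) := by
      rw [contains3412_permCast, contains3412_insWrap]
      rintro (hC | hC)
      · exact perm0_avoid _ hC
      · exact hA hC
    have h0 : pv (permCast hEq (insWrap (1 : Equiv.Perm (Fin 0)) τ)) 0 = 0 + 1 := by
      rw [pv_permCast, pv_iw_zero]
    obtain ⟨hpk, hcl1, hcl2⟩ := windows hIP hAP hEq h0
    rw [chopT_eq _ (0+2) (n-2) (by omega) hcl2]
    exact chop_cast_iw_right _ τ hEq _ hcl2

end FE8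

noncomputable section FE9

open Finset Equiv

set_option maxHeartbeats 2000000 in
lemma fiber2 {n b c d : ℕ} {p q : Fin 4 →₀ ℕ} (hn : 2 ≤ n) (h0 : p 0 + q 0 + 2 = n)
    (h1 : p 1 + q 1 + 1 = b) (h2 : p 2 + q 2 + 2 = c) (h3 : p 3 + q 3 = d) :
    (((IF n b c d).filter fun π => 2 ≤ pv π 0).filter
        fun π => fstats π = p ∧ sstats π = q).card
      = (Bp p).card * (IF (q 0) (q 1) (q 2) (q 3)).card := by
  by_cases hp0 : p 0 = 0
  · rw [Bp, if_pos hp0, Finset.card_empty, Nat.zero_mul, Finset.card_eq_zero,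
      Finset.filter_eq_empty_iff]
    intro π hπ
    rw [mem_filter] at hπ
    obtain ⟨-, h2k⟩ := hπ
    rintro ⟨hfp, -⟩
    have : pv π 0 - 1 = p 0 := by rw [← hfp]; rfl
    omega
  rw [Bp, if_neg hp0, ← Finset.card_product]
  refine Finset.card_bij' (fun π _ => (chopT π 1 (p 0), chopT π (p 0 + 2) (q 0)))
    (fun στ _ => permCast h0 (insWrap στ.1 στ.2)) ?hi ?hj ?li ?ri
  case hi =>
    intro π hπ
    beta_reduce
    rw [mem_filter, mem_filter, mem_IF] at hπ
    obtain ⟨⟨⟨hI, hA, hinv, hdes, hfix⟩, h2k⟩, hfp, hfq⟩ := hπ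
    have c0 : pv π 0 - 1 = p 0 := by rw [← hfp]; rfl
    have c1 : winInv π 1 (pv π 0 - 1) + 2*(pv π 0 - 1) = p 1 := by rw [← hfp]; rfl
    have c2 : winDes π 1 (pv π 0 - 1) = p 2 := by rw [← hfp]; rfl
    have c3 : winFix π 1 (pv π 0 - 1) = p 3 := by rw [← hfp]; rfl
    have s0 : n - pv π 0 - 1 = q 0 := by rw [← hfq]; rfl
    have s1 : winInv π (pv π 0 + 1) (n - pv π 0 - 1) = q 1 := by rw [← hfq]; rfl
    have s2 : winDes π (pv π 0 + 1) (n - pv π 0 - 1) = q 2 := by rw [← hfq]; rfl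
    have s3 : winFix π (pv π 0 + 1) (n - pv π 0 - 1) = q 3 := by rw [← hfq]; rfl
    have hk : pv π 0 = p 0 + 1 := by omega
    rw [c0] at c1 c2 c3
    rw [s0, hk, show p 0 + 1 + 1 = p 0 + 2 from rfl] at s1 s2 s3
    obtain ⟨hpk, hcl1, hcl2⟩ := windows hI hA h0 hk
    rw [chopT_eq π 1 (p 0) (by omega) hcl1, chopT_eq π (p 0 + 2) (q 0) (by omega) hcl2]
    rw [mem_product]
    constructor
    · rw [mem_IFsub]
      refine ⟨isInvolution_chop π 1 (p 0) (by omega) hcl1 hI,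
        fun hC => hA (contains3412_chop π 1 (p 0) (by omega) hcl1 hC), ?_, ?_, ?_⟩
      · rw [invCount_chop]
        exact c1
      · rw [desCount_chop]
        exact c2
      · rw [fixCount_chop]
        exact c3
    · rw [mem_IF]
      refine ⟨isInvolution_chop π (p 0 + 2) (q 0) (by omega) hcl2 hI,
        fun hC => hA (contains3412_chop π (p 0 + 2) (q 0) (by omega) hcl2 hC), ?_, ?_, ?_⟩
      · rw [invCount_chop]
        exact s1
      · rw [desCount_chop]
        exact s2
      · rw [fixCount_chop]
        exact s3
  case hj =>
    intro στ hστ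
    obtain ⟨σ, τ, rfl⟩ : ∃ σ τ, στ = (σ, τ) := ⟨στ.1, στ.2, rfl⟩
    dsimp only
    rw [mem_product] at hστ
    obtain ⟨hσ, hτ⟩ := hστ
    rw [mem_IFsub] at hσ
    rw [mem_IF] at hτ
    obtain ⟨hIσ, hAσ, hbσ, hcσ, hfσ⟩ := hσ
    obtain ⟨hIτ, hAτ, hbτ, hcτ, hfτ⟩ := hτ
    have hIP : IsInvolution (permCast h0 (insWrap σ τ)) := by
      rw [isInvolution_permCast, isInvolution_insWrap]
      exact ⟨hIσ, hIτ⟩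
    have hAP : ¬ Contains3412 (permCast h0 (insWrap σ τ)) := by
      rw [contains3412_permCast, contains3412_insWrap]
      rintro (hC | hC)
      · exact hAσ hC
      · exact hAτ hC
    have e0 : pv (permCast h0 (insWrap σ τ)) 0 = p 0 + 1 := by
      rw [pv_permCast, pv_iw_zero]
    obtain ⟨hpkP, hcl1P, hcl2P⟩ := windows hIP hAP h0 e0
    have w1 : winInv (permCast h0 (insWrap σ τ)) 1 (p 0) = invCount σ := by
      rw [← invCount_chop _ 1 (p 0) (by omega) hcl1P,
        chop_cast_iw_left σ τ h0 (by omega) hcl1P]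
    have w2 : winDes (permCast h0 (insWrap σ τ)) 1 (p 0) = desCount σ := by
      rw [← desCount_chop _ 1 (p 0) (by omega) hcl1P,
        chop_cast_iw_left σ τ h0 (by omega) hcl1P]
    have w3 : winFix (permCast h0 (insWrap σ τ)) 1 (p 0) = fixCount σ := by
      rw [← fixCount_chop _ 1 (p 0) (by omega) hcl1P,
        chop_cast_iw_left σ τ h0 (by omega) hcl1P]
    have v1 : winInv (permCast h0 (insWrap σ τ)) (p 0 + 2) (q 0) = invCount τ := by
      rw [← invCount_chop _ (p 0 + 2) (q 0) (by omega) hcl2P,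
        chop_cast_iw_right σ τ h0 (by omega) hcl2P]
    have v2 : winDes (permCast h0 (insWrap σ τ)) (p 0 + 2) (q 0) = desCount τ := by
      rw [← desCount_chop _ (p 0 + 2) (q 0) (by omega) hcl2P,
        chop_cast_iw_right σ τ h0 (by omega) hcl2P]
    have v3 : winFix (permCast h0 (insWrap σ τ)) (p 0 + 2) (q 0) = fixCount τ := by
      rw [← fixCount_chop _ (p 0 + 2) (q 0) (by omega) hcl2P,
        chop_cast_iw_right σ τ h0 (by omega) hcl2P]
    have r1 : invCount ((σ, τ).1) = invCount σ := rfl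
    have r2 : desCount ((σ, τ).1) = desCount σ := rfl
    have r3 : fixCount ((σ, τ).1) = fixCount σ := rfl
    have r4 : invCount ((σ, τ).2) = invCount τ := rfl
    have r5 : desCount ((σ, τ).2) = desCount τ := rfl
    have r6 : fixCount ((σ, τ).2) = fixCount τ := rfl
    rw [mem_filter, mem_filter, mem_IF]
    refine ⟨⟨⟨hIP, hAP, ?_, ?_, ?_⟩, by omega⟩, ?_, ?_⟩
    · rw [invCount_permCast, invCount_insWrap]
      omega
    · rw [desCount_permCast, desCount_insWrap, if_neg hp0]
      omega
    · rw [fixCount_permCast, fixCount_insWrap]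
      omega
    · rw [fstats, e0, show p 0 + 1 - 1 = p 0 from rfl, w1, w2, w3, hbσ, hcσ, hfσ]
      exact mk4_eta p
    · rw [sstats, e0, show p 0 + 1 + 1 = p 0 + 2 from rfl,
        show n - (p 0 + 1) - 1 = q 0 by omega, v1, v2, v3, hbτ, hcτ, hfτ]
      exact mk4_eta q
  case li =>
    intro π hπ
    beta_reduce
    rw [mem_filter, mem_filter, mem_IF] at hπ
    obtain ⟨⟨⟨hI, hA, -, -, -⟩, h2k⟩, hfp, -⟩ := hπ
    have c0 : pv π 0 - 1 = p 0 := by rw [← hfp]; rfl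
    have hk : pv π 0 = p 0 + 1 := by omega
    obtain ⟨hpk, hcl1, hcl2⟩ := windows hI hA h0 hk
    rw [chopT_eq π 1 (p 0) (by omega) hcl1, chopT_eq π (p 0 + 2) (q 0) (by omega) hcl2]
    exact structW π h0 hk hpk hcl1 hcl2
  case ri =>
    intro στ hστ
    obtain ⟨σ, τ, rfl⟩ : ∃ σ τ, στ = (σ, τ) := ⟨στ.1, στ.2, rfl⟩
    dsimp only
    rw [mem_product] at hστ
    obtain ⟨hσ, hτ⟩ := hστ
    rw [mem_IFsub] at hσ
    rw [mem_IF] at hτ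
    have hIP : IsInvolution (permCast h0 (insWrap σ τ)) := by
      rw [isInvolution_permCast, isInvolution_insWrap]
      exact ⟨hσ.1, hτ.1⟩
    have hAP : ¬ Contains3412 (permCast h0 (insWrap σ τ)) := by
      rw [contains3412_permCast, contains3412_insWrap]
      rintro (hC | hC)
      · exact hσ.2.1 hC
      · exact hτ.2.1 hC
    have e0 : pv (permCast h0 (insWrap σ τ)) 0 = p 0 + 1 := by
      rw [pv_permCast, pv_iw_zero]
    obtain ⟨hpkP, hcl1P, hcl2P⟩ := windows hIP hAP h0 e0
    rw [chopT_eq _ 1 (p 0) (by omega) hcl1P, chopT_eq _ (p 0 + 2) (q 0) (by omega) hcl2P]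
    exact Prod.ext (chop_cast_iw_left σ τ h0 (by omega) hcl1P)
      (chop_cast_iw_right σ τ h0 (by omega) hcl2P)

end FE9

noncomputable section FE10

open Finset Equiv

set_option maxHeartbeats 1000000 in
lemma countC2 {n b c d : ℕ} (hn : 1 ≤ n) :
    ((IF n b c d).filter fun π => 2 ≤ pv π 0).card
      = if 2 ≤ n ∧ 1 ≤ b ∧ 2 ≤ c then
          ∑ pq ∈ Finset.HasAntidiagonal.antidiagonal (mk4 (n-2) (b-1) (c-2) d),
            (Bp pq.1).card * (IF (pq.2 0) (pq.2 1) (pq.2 2) (pq.2 3)).card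
        else 0 := by
  by_cases hcond : 2 ≤ n ∧ 1 ≤ b ∧ 2 ≤ c
  swap
  · rw [if_neg hcond, Finset.card_eq_zero, Finset.filter_eq_empty_iff]
    intro π hπ
    rw [mem_IF] at hπ
    obtain ⟨hI, hA, hb, hc, hf⟩ := hπ
    intro h2k
    have hkn : pv π 0 < n := pv_lt π (by omega)
    have hinv := (isInvolution_iff π).mp hI
    have hpk : pv π (pv π 0) = 0 := hinv 0 (by omega)
    have hcls : ∀ i < n, i ≤ pv π 0 ↔ pv π i ≤ pv π 0 :=
      fun i hi => blockClosure hI hA (by omega) hi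
    -- b ≥ 1 : the pair (0, pv π 0) is an inversion
    have hbge : 0 < invCount π := by
      apply Finset.card_pos.mpr
      refine ⟨(⟨0, by omega⟩, ⟨pv π 0, hkn⟩), ?_⟩
      rw [mem_filter]
      refine ⟨mem_univ _, ?_⟩
      show (⟨0, by omega⟩ : Fin n) < ⟨pv π 0, hkn⟩ ∧
        π ⟨pv π 0, hkn⟩ < π ⟨0, by omega⟩
      constructor
      · rw [Fin.mk_lt_mk]
        omega
      · rw [Fin.lt_def]
        have e1 : pv π (pv π 0) = ((π ⟨pv π 0, hkn⟩ : Fin n) : ℕ) := pv_def π hkn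
        have e0 : pv π 0 = ((π ⟨0, by omega⟩ : Fin n) : ℕ) := pv_def π (by omega)
        omega
    -- c ≥ 2 : descents at 0 and at pv π 0 - 1
    have hp1 : pv π 1 < pv π 0 := by
      have h1n : (1:ℕ) < n := by omega
      have hle : pv π 1 ≤ pv π 0 := (hcls 1 h1n).mp (by omega)
      have hne : pv π 1 ≠ pv π 0 := by
        intro he
        have := pv_inj π (i := 1) (j := 0) h1n (by omega) he
        omega
      omega
    have hdk : pv π (pv π 0 - 1 + 1) < pv π (pv π 0 - 1) := by
      rw [show pv π 0 - 1 + 1 = pv π 0 by omega, hpk]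
      have hne : pv π (pv π 0 - 1) ≠ 0 := by
        intro he
        have he2 : pv π (pv π 0 - 1) = pv π (pv π 0) := by rw [hpk, he]
        have := pv_inj π (i := pv π 0 - 1) (j := pv π 0) (by omega) hkn he2
        omega
      omega
    have hcge : 2 ≤ desCount π := by
      apply Finset.one_lt_card.mpr
      refine ⟨0, ?_, pv π 0 - 1, ?_, by omega⟩
      · rw [mem_filter, mem_range]
        refine ⟨by omega, ?_⟩
        show pv π (0+1) < pv π 0
        rw [show (0:ℕ)+1 = 1 from rfl]
        exact hp1
      · rw [mem_filter, mem_range]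
        exact ⟨by omega, hdk⟩
    exact hcond ⟨by omega, by omega, by omega⟩
  obtain ⟨hn2, hb, hc⟩ := hcond
  rw [if_pos ⟨hn2, hb, hc⟩]
  rw [Finset.card_eq_sum_card_fiberwise
    (f := fun π => (fstats π, sstats π))
    (t := Finset.HasAntidiagonal.antidiagonal (mk4 (n-2) (b-1) (c-2) d)) ?ht]
  case ht =>
    intro π hπ
    rw [Finset.mem_coe, mem_filter, mem_IF] at hπ
    obtain ⟨⟨hI, hA, hinv, hdes, hfix⟩, h2k⟩ := hπ
    have hkn : pv π 0 < n := pv_lt π (by omega)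
    obtain ⟨a, hk⟩ : ∃ a, pv π 0 = a + 1 := ⟨pv π 0 - 1, by omega⟩
    have hEq : a + (n - a - 2) + 2 = n := by omega
    obtain ⟨hpk, hcl1, hcl2⟩ := windows hI hA hEq hk
    have hrt := structW π hEq hk hpk hcl1 hcl2
    have e1 : invCount π = winInv π 1 a + winInv π (a+2) (n-a-2) + 2*a + 1 := by
      conv_lhs => rw [← hrt]
      rw [invCount_permCast, invCount_insWrap, invCount_chop, invCount_chop]
    have e2 : desCount π = winDes π 1 a + winDes π (a+2) (n-a-2) + 1
        + (if a = 0 then 0 else 1) := by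
      conv_lhs => rw [← hrt]
      rw [desCount_permCast, desCount_insWrap, desCount_chop, desCount_chop]
    have e3 : fixCount π = winFix π 1 a + winFix π (a+2) (n-a-2) := by
      conv_lhs => rw [← hrt]
      rw [fixCount_permCast, fixCount_insWrap, fixCount_chop, fixCount_chop]
    have hane : a ≠ 0 := by omega
    rw [if_neg hane] at e2
    rw [Finset.mem_coe, Finset.HasAntidiagonal.mem_antidiagonal]
    show fstats π + sstats π = mk4 (n-2) (b-1) (c-2) d
    rw [fstats, sstats, hk]
    rw [show a + 1 - 1 = a from rfl, show a + 1 + 1 = a + 2 from rfl,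
      show n - (a+1) - 1 = n - a - 2 by omega]
    ext i
    rw [Finsupp.add_apply]
    fin_cases i
    · show mk4 _ _ _ _ 0 + mk4 _ _ _ _ 0 = mk4 _ _ _ _ 0
      rw [mk4_0, mk4_0, mk4_0]
      omega
    · show mk4 _ _ _ _ 1 + mk4 _ _ _ _ 1 = mk4 _ _ _ _ 1
      rw [mk4_1, mk4_1, mk4_1]
      omega
    · show mk4 _ _ _ _ 2 + mk4 _ _ _ _ 2 = mk4 _ _ _ _ 2
      rw [mk4_2, mk4_2, mk4_2]
      omega
    · show mk4 _ _ _ _ 3 + mk4 _ _ _ _ 3 = mk4 _ _ _ _ 3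
      rw [mk4_3, mk4_3, mk4_3]
      omega
  apply Finset.sum_congr rfl
  intro pq hpq
  rw [Finset.HasAntidiagonal.mem_antidiagonal] at hpq
  have c0 : pq.1 0 + pq.2 0 = n - 2 := by
    have := congrArg (fun g => g 0) hpq
    simpa [Finsupp.add_apply, mk4_0] using this
  have c1 : pq.1 1 + pq.2 1 = b - 1 := by
    have := congrArg (fun g => g 1) hpq
    simpa [Finsupp.add_apply, mk4_1] using this
  have c2 : pq.1 2 + pq.2 2 = c - 2 := by
    have := congrArg (fun g => g 2) hpq
    simpa [Finsupp.add_apply, mk4_2] using this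
  have c3 : pq.1 3 + pq.2 3 = d := by
    have := congrArg (fun g => g 3) hpq
    simpa [Finsupp.add_apply, mk4_3] using this
  rw [Finset.filter_congr (q := fun π => fstats π = pq.1 ∧ sstats π = pq.2)
    (fun π _ => by rw [Prod.ext_iff])]
  exact fiber2 hn2 (by omega) (by omega) (by omega) (by omega)

end FE10

noncomputable section FE11

open Finset Equiv

lemma split3 (n b c d : ℕ) :
    (IF n b c d).card
      = ((IF n b c d).filter fun π => pv π 0 = 0).card
      + ((IF n b c d).filter fun π => pv π 0 = 1).card
      + ((IF n b c d).filter fun π => 2 ≤ pv π 0).card := by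
  have h1 := Finset.card_filter_add_card_filter_not (s := IF n b c d)
    (p := fun π => pv π 0 = 0)
  have h2 := Finset.card_filter_add_card_filter_not
    (s := (IF n b c d).filter fun π => ¬ pv π 0 = 0) (p := fun π => pv π 0 = 1)
  rw [Finset.filter_filter, Finset.filter_filter] at h2
  have e1 : (IF n b c d).filter (fun π => ¬ pv π 0 = 0 ∧ pv π 0 = 1)
      = (IF n b c d).filter (fun π => pv π 0 = 1) :=
    Finset.filter_congr (fun π _ => by omega)
  have e2 : (IF n b c d).filter (fun π => ¬ pv π 0 = 0 ∧ ¬ pv π 0 = 1)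
      = (IF n b c d).filter (fun π => 2 ≤ pv π 0) :=
    Finset.filter_congr (fun π _ => by omega)
  rw [e1, e2] at h2
  omega

lemma master (n b c d : ℕ) (hn : 1 ≤ n) :
    (IF n b c d).card
      = (if 1 ≤ d then (IF (n-1) b c (d-1)).card else 0)
      + (if 2 ≤ n ∧ 1 ≤ b ∧ 1 ≤ c then (IF (n-2) (b-1) (c-1) d).card else 0)
      + (if 2 ≤ n ∧ 1 ≤ b ∧ 2 ≤ c then
          ∑ pq ∈ Finset.HasAntidiagonal.antidiagonal (mk4 (n-2) (b-1) (c-2) d),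
            (Bp pq.1).card * (IF (pq.2 0) (pq.2 1) (pq.2 2) (pq.2 3)).card
        else 0) := by
  rw [split3 n b c d, countC0 hn, countC1 hn, countC2 hn]

lemma IFsub_zero (b c d : ℕ) :
    (IFsub 0 b c d).card = if b = 0 ∧ c = 0 ∧ d = 0 then 1 else 0 := by
  by_cases h : b = 0 ∧ c = 0 ∧ d = 0
  · rw [if_pos h]
    obtain ⟨rfl, rfl, rfl⟩ := h
    rw [Finset.card_eq_one]
    refine ⟨1, Finset.eq_singleton_iff_unique_mem.mpr ⟨?_, ?_⟩⟩
    · rw [mem_IFsub]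
      exact ⟨perm0_inv 1, perm0_avoid 1, by rw [perm0_invCount], by rw [perm0_desCount],
        by rw [perm0_fixCount]⟩
    · intro σ _
      apply pv_ext
      intro i hi
      omega
  · rw [if_neg h, Finset.card_eq_zero, Finset.eq_empty_iff_forall_notMem]
    intro σ hσ
    rw [mem_IFsub] at hσ
    obtain ⟨-, -, h1, h2, h3⟩ := hσ
    rw [perm0_invCount] at h1
    rw [perm0_desCount] at h2
    rw [perm0_fixCount] at h3
    exact h ⟨by omega, h2.symm, h3.symm⟩

lemma finsupp0 (p : Fin 4 →₀ ℕ) : p = 0 ↔ p 0 = 0 ∧ p 1 = 0 ∧ p 2 = 0 ∧ p 3 = 0 := by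
  constructor
  · rintro rfl
    simp
  · rintro ⟨h0, h1, h2, h3⟩
    ext i
    fin_cases i <;> simpa

lemma mk4_le (a b c d : ℕ) (m : Fin 4 →₀ ℕ) :
    mk4 a b c d ≤ m ↔ a ≤ m 0 ∧ b ≤ m 1 ∧ c ≤ m 2 ∧ d ≤ m 3 := by
  rw [Finsupp.le_def]
  constructor
  · intro h
    exact ⟨h 0, h 1, h 2, h 3⟩
  · rintro ⟨h0, h1, h2, h3⟩ i
    fin_cases i
    · exact h0
    · exact h1
    · exact h2
    · exact h3

lemma mk4_sub (a b c d : ℕ) (m : Fin 4 →₀ ℕ) :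
    m - mk4 a b c d = mk4 (m 0 - a) (m 1 - b) (m 2 - c) (m 3 - d) := by
  ext i
  rw [Finsupp.tsub_apply]
  fin_cases i <;> rfl

end FE11

noncomputable section FE12

open Finset Equiv MvPowerSeries

lemma Finv_coeff (m : Fin 4 →₀ ℕ) :
    coeff m Finv = ((IF (m 0) (m 1) (m 2) (m 3)).card : ℚ) := by
  show Finv m = _
  rw [Finv]
  norm_cast
  rw [Set.ncard_eq_toFinset_card']
  congr 1
  rw [IF]
  simp [Set.toFinset_setOf]

lemma FinvSub_coeff (p : Fin 4 →₀ ℕ) :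
    coeff p FinvSub = ((IFsub (p 0) (p 1) (p 2) (p 3)).card : ℚ) := by
  show FinvSub p = _
  rw [FinvSub]
  norm_cast
  rw [Set.ncard_eq_toFinset_card']
  congr 1
  rw [IFsub]
  simp [Set.toFinset_setOf]

lemma FinvSub_one_coeff (p : Fin 4 →₀ ℕ) :
    coeff p (FinvSub - 1) = ((Bp p).card : ℚ) := by
  rw [map_sub, FinvSub_coeff, MvPowerSeries.coeff_one]
  by_cases hp : p 0 = 0
  · rw [Bp, if_pos hp, Finset.card_empty, Nat.cast_zero, hp, IFsub_zero]
    by_cases hrest : p 1 = 0 ∧ p 2 = 0 ∧ p 3 = 0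
    · rw [if_pos hrest, if_pos ((finsupp0 p).mpr ⟨hp, hrest.1, hrest.2.1, hrest.2.2⟩)]
      norm_num
    · rw [if_neg hrest, if_neg (fun h => hrest ⟨((finsupp0 p).mp h).2.1,
        ((finsupp0 p).mp h).2.2.1, ((finsupp0 p).mp h).2.2.2⟩)]
      norm_num
  · rw [Bp, if_neg hp, if_neg (fun h => hp ((finsupp0 p).mp h).1), sub_zero]

lemma Xmul1 : (X 0 : MvPowerSeries (Fin 4) ℚ) * X 3 = monomial (mk4 1 0 0 1) 1 := by
  have heq : (Finsupp.single (0:Fin 4) 1 + Finsupp.single 3 1) = mk4 1 0 0 1 := by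
    ext i
    rw [Finsupp.add_apply, Finsupp.single_apply, Finsupp.single_apply]
    fin_cases i <;> simp [mk4]
  rw [X_def, X_def, monomial_mul_monomial, one_mul, heq]

lemma Xmul2 : (X 0 : MvPowerSeries (Fin 4) ℚ) ^ 2 * X 1 * X 2
    = monomial (mk4 2 1 1 0) 1 := by
  have heq : (Finsupp.single (0:Fin 4) 2 + Finsupp.single 1 1 + Finsupp.single 2 1)
      = mk4 2 1 1 0 := by
    ext i
    rw [Finsupp.add_apply, Finsupp.add_apply, Finsupp.single_apply, Finsupp.single_apply,
      Finsupp.single_apply]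
    fin_cases i <;> simp [mk4]
  rw [X_pow_eq, X_def, X_def, monomial_mul_monomial, monomial_mul_monomial, one_mul,
    one_mul, heq]

lemma Xmul3 : (X 0 : MvPowerSeries (Fin 4) ℚ) ^ 2 * X 1 * X 2 ^ 2
    = monomial (mk4 2 1 2 0) 1 := by
  have heq : (Finsupp.single (0:Fin 4) 2 + Finsupp.single 1 1 + Finsupp.single 2 2)
      = mk4 2 1 2 0 := by
    ext i
    rw [Finsupp.add_apply, Finsupp.add_apply, Finsupp.single_apply, Finsupp.single_apply,
      Finsupp.single_apply]
    fin_cases i <;> simp [mk4]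
  rw [X_pow_eq, X_pow_eq, X_def, monomial_mul_monomial, monomial_mul_monomial, one_mul,
    one_mul, heq]


end FE12

open MvPowerSeries in
/-- `F = 1 + xw·F + x²yz·F + x²yz²·(F(xy²,y,z,w) − 1)·F`. -/
theorem Finv_functional_equation :
    Finv = 1 + (X 0) * (X 3) * Finv + (X 0) ^ 2 * (X 1) * (X 2) * Finv +
      (X 0) ^ 2 * (X 1) * (X 2) ^ 2 * (FinvSub - 1) * Finv := by
  apply MvPowerSeries.ext
  intro m
  rw [map_add, map_add, map_add, MvPowerSeries.coeff_one, Xmul1,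
    show (X 0 : MvPowerSeries (Fin 4) ℚ) ^ 2 * X 1 * X 2 * Finv
      = monomial (mk4 2 1 1 0) 1 * Finv by rw [Xmul2],
    show (X 0 : MvPowerSeries (Fin 4) ℚ) ^ 2 * X 1 * X 2 ^ 2 * (FinvSub - 1) * Finv
      = monomial (mk4 2 1 2 0) 1 * ((FinvSub - 1) * Finv) by rw [← mul_assoc, Xmul3],
    coeff_monomial_mul, coeff_monomial_mul, coeff_monomial_mul, Finv_coeff,
    one_mul, one_mul, one_mul]
  have hc1 : coeff (m - mk4 1 0 0 1) Finv
      = ((IF (m 0 - 1) (m 1) (m 2) (m 3 - 1)).card : ℚ) := by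
    rw [mk4_sub, Finv_coeff, mk4_0, mk4_1, mk4_2, mk4_3, Nat.sub_zero, Nat.sub_zero]
  have hc2 : coeff (m - mk4 2 1 1 0) Finv
      = ((IF (m 0 - 2) (m 1 - 1) (m 2 - 1) (m 3)).card : ℚ) := by
    rw [mk4_sub, Finv_coeff, mk4_0, mk4_1, mk4_2, mk4_3, Nat.sub_zero]
  have hc3 : coeff (m - mk4 2 1 2 0) ((FinvSub - 1) * Finv)
      = ((∑ pq ∈ Finset.HasAntidiagonal.antidiagonal (mk4 (m 0 - 2) (m 1 - 1) (m 2 - 2) (m 3)),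
          (Bp pq.1).card * (IF (pq.2 0) (pq.2 1) (pq.2 2) (pq.2 3)).card : ℕ) : ℚ) := by
    rw [coeff_mul, mk4_sub, Nat.sub_zero, Nat.cast_sum]
    apply Finset.sum_congr rfl
    intro pq _
    rw [FinvSub_one_coeff, Finv_coeff, Nat.cast_mul]
  rw [hc1, hc2, hc3]
  rcases Nat.eq_zero_or_pos (m 0) with hm | hm
  · have hne1 : ¬ mk4 1 0 0 1 ≤ m := by
      rw [mk4_le]
      omega
    have hne2 : ¬ mk4 2 1 1 0 ≤ m := by
      rw [mk4_le]
      omega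
    have hne3 : ¬ mk4 2 1 2 0 ≤ m := by
      rw [mk4_le]
      omega
    rw [if_neg hne1, if_neg hne2, if_neg hne3, hm, IF_zero]
    by_cases hrest : m 1 = 0 ∧ m 2 = 0 ∧ m 3 = 0
    · rw [if_pos hrest, if_pos ((finsupp0 m).mpr ⟨hm, hrest.1, hrest.2.1, hrest.2.2⟩)]
      norm_num
    · rw [if_neg hrest, if_neg (fun h => hrest ⟨((finsupp0 m).mp h).2.1,
        ((finsupp0 m).mp h).2.2.1, ((finsupp0 m).mp h).2.2.2⟩)]
      norm_num
  · have hne0 : ¬ m = 0 := fun h => by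
      rw [((finsupp0 m).mp h).1] at hm
      omega
    rw [if_neg hne0]
    have e1 : (mk4 1 0 0 1 ≤ m) = (1 ≤ m 3) := by
      rw [mk4_le]
      apply propext
      constructor
      · rintro ⟨-, -, -, h⟩
        exact h
      · intro h
        exact ⟨by omega, by omega, by omega, h⟩
    have e2 : (mk4 2 1 1 0 ≤ m) = (2 ≤ m 0 ∧ 1 ≤ m 1 ∧ 1 ≤ m 2) := by
      rw [mk4_le]
      apply propext
      constructor
      · rintro ⟨h1, h2, h3, -⟩
        exact ⟨h1, h2, h3⟩
      · rintro ⟨h1, h2, h3⟩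
        exact ⟨h1, h2, h3, by omega⟩
    have e3 : (mk4 2 1 2 0 ≤ m) = (2 ≤ m 0 ∧ 1 ≤ m 1 ∧ 2 ≤ m 2) := by
      rw [mk4_le]
      apply propext
      constructor
      · rintro ⟨h1, h2, h3, -⟩
        exact ⟨h1, h2, h3⟩
      · rintro ⟨h1, h2, h3⟩
        exact ⟨h1, h2, h3, by omega⟩
    simp only [e1, e2, e3]
    rw [master (m 0) (m 1) (m 2) (m 3) hm]
    push_cast [apply_ite (Nat.cast : ℕ → ℚ)]
    ring
end

section
/- Let π ∈ I_n(3412). Then the number of occurrences of the consecutive pattern 123 in π (indices i with π_i < π_{i+1} < π_{i+2}) equals the total number of occurrences in the Motzkin path Ψ(π) of the three-letter factors HHH, HHU, DHH, DHU. -/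
open scoped Classical

section MyAux

open Finset

private lemma getD_drop' {α} (w : List α) (i j : ℕ) (d : α) :
    (w.drop i).getD j d = w.getD (i + j) d := by
  simp [List.getD_eq_getElem?_getD, List.getElem?_drop]

private lemma prefix3_iff (w : List Step) (a b c : Step) (i : ℕ) :
    ([a, b, c] <+: w.drop i) ↔
      i + 2 < w.length ∧ w.getD i Step.H = a ∧ w.getD (i + 1) Step.H = b ∧
        w.getD (i + 2) Step.H = c := by
  constructor
  · rintro ⟨t, ht⟩
    have hd : w.drop i = a :: b :: c :: t := ht.symm
    have hlen : w.length - i = t.length + 3 := by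
      have := congrArg List.length hd
      simp at this; omega
    refine ⟨by omega, ?_, ?_, ?_⟩
    · have := getD_drop' w i 0 Step.H; rw [hd] at this; simpa using this.symm
    · have := getD_drop' w i 1 Step.H; rw [hd] at this; simpa using this.symm
    · have := getD_drop' w i 2 Step.H; rw [hd] at this; simpa using this.symm
  · rintro ⟨hi, ha, hb, hc⟩
    have h0 : i < w.length := by omega
    have h1 : i + 1 < w.length := by omega
    have h2 : i + 2 < w.length := by omega
    refine ⟨w.drop (i + 3), ?_⟩
    rw [List.getD_eq_getElem w Step.H h0] at ha
    rw [List.getD_eq_getElem w Step.H h1] at hb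
    rw [List.getD_eq_getElem w Step.H h2] at hc
    rw [List.drop_eq_getElem_cons h0, List.drop_eq_getElem_cons h1,
      List.drop_eq_getElem_cons h2]
    simp [ha, hb, hc]

private lemma psiWord_getD {n : ℕ} (π : Equiv.Perm (Fin n)) (j : ℕ) (h : j < n) :
    (psiWord π).getD j Step.H =
      if π ⟨j, h⟩ = ⟨j, h⟩ then Step.H
      else if (⟨j, h⟩ : Fin n) < π ⟨j, h⟩ then Step.U else Step.D := by
  have hl : j < (psiWord π).length := by simpa [psiWord] using h
  rw [List.getD_eq_getElem _ _ hl]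
  simp [psiWord]

private lemma psiWord_length {n : ℕ} (π : Equiv.Perm (Fin n)) :
    (psiWord π).length = n := by simp [psiWord]

private lemma mid_fixed {n : ℕ} (π : Equiv.Perm (Fin n)) (h₁ : IsInvolution π)
    (h₂ : ¬ Contains3412 π) (p q r : Fin n) (hpq : (p : ℕ) + 1 = q)
    (hqr : (q : ℕ) + 1 = r) (h : π p < π q) (h' : π q < π r) : π q = q := by
  by_contra hne
  rcases lt_or_gt_of_ne hne with hlt | hgt
  · -- π q < q
    have hπj : π (π q) = q := h₁ q
    have hπk : π (π p) = p := h₁ p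
    have hjp : π q < p := by
      have hv : ((π q : Fin n) : ℕ) < (q : ℕ) := hlt
      rcases lt_or_eq_of_le (show ((π q : Fin n) : ℕ) ≤ (p : ℕ) by omega) with hv2 | hv2
      · exact hv2
      · exfalso
        have heq : π q = p := Fin.ext hv2
        have : π p = q := by rw [← heq, hπj]
        have : ((π p : Fin n) : ℕ) = (q : ℕ) := by rw [this]
        have hlt2 : ((π p : Fin n) : ℕ) < ((π q : Fin n) : ℕ) := h
        omega
    exact h₂ ⟨π p, π q, p, q, h, hjp, Fin.lt_def.mpr (by omega), h,
      by rw [hπk]; exact hjp, by rw [hπk, hπj]; exact Fin.lt_def.mpr (by omega)⟩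
  · -- q < π q
    have hπj : π (π q) = q := h₁ q
    have hπk : π (π r) = r := h₁ r
    have hrj : r < π q := by
      have hv : (q : ℕ) < ((π q : Fin n) : ℕ) := hgt
      rcases lt_or_eq_of_le (show (r : ℕ) ≤ ((π q : Fin n) : ℕ) by omega) with hv2 | hv2
      · exact hv2
      · exfalso
        have heq : π q = r := Fin.ext hv2.symm
        have : π r = q := by rw [← heq, hπj]
        have : ((π r : Fin n) : ℕ) = (q : ℕ) := by rw [this]
        have hlt2 : ((π q : Fin n) : ℕ) < ((π r : Fin n) : ℕ) := h'
        omega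
    exact h₂ ⟨q, r, π q, π r, Fin.lt_def.mpr (by omega), hrj, h',
      by rw [hπj, hπk]; exact Fin.lt_def.mpr (by omega),
      by rw [hπk]; exact hrj, h'⟩

private lemma pointwise_iff {n : ℕ} (π : Equiv.Perm (Fin n)) (h₁ : IsInvolution π)
    (h₂ : ¬ Contains3412 π) (i : ℕ) (hi : i + 2 < n) :
    (pv π i < pv π (i + 1) ∧ pv π (i + 1) < pv π (i + 2)) ↔
      ((psiWord π).getD i Step.H = Step.H ∨ (psiWord π).getD i Step.H = Step.D) ∧
      (psiWord π).getD (i + 1) Step.H = Step.H ∧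
      ((psiWord π).getD (i + 2) Step.H = Step.H ∨
        (psiWord π).getD (i + 2) Step.H = Step.U) := by
  have h0 : i < n := by omega
  have h1 : i + 1 < n := by omega
  have h2 : i + 2 < n := hi
  set p : Fin n := ⟨i, h0⟩
  set q : Fin n := ⟨i + 1, h1⟩
  set r : Fin n := ⟨i + 2, h2⟩
  have hmk0 : ((⟨i, h0⟩ : Fin n) : ℕ) = i := rfl
  have hmk1 : ((⟨i + 1, h1⟩ : Fin n) : ℕ) = i + 1 := rfl
  have hmk2 : ((⟨i + 2, h2⟩ : Fin n) : ℕ) = i + 2 := rfl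
  have hpv0 : pv π i = ((π p : Fin n) : ℕ) := by simp [pv, h0, p]
  have hpv1 : pv π (i + 1) = ((π q : Fin n) : ℕ) := by simp [pv, h1, q]
  have hpv2 : pv π (i + 2) = ((π r : Fin n) : ℕ) := by simp [pv, h2, r]
  rw [hpv0, hpv1, hpv2, psiWord_getD π i h0, psiWord_getD π (i + 1) h1,
    psiWord_getD π (i + 2) h2]
  have hA : ((if π p = p then Step.H else if p < π p then Step.U else Step.D) = Step.H ∨
      (if π p = p then Step.H else if p < π p then Step.U else Step.D) = Step.D) ↔
      ((π p : Fin n) : ℕ) ≤ (p : ℕ) := by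
    split_ifs with hfix hup
    · simp [hfix]
    · have hv := Fin.lt_def.mp hup
      simp
      omega
    · have hv : π p < p := lt_of_le_of_ne (not_lt.mp hup) hfix
      have := Fin.lt_def.mp hv
      simp
      omega
  have hB : ((if π q = q then Step.H else if q < π q then Step.U else Step.D) = Step.H) ↔
      π q = q := by
    split_ifs with hfix hup <;> simp [hfix]
  have hC : ((if π r = r then Step.H else if r < π r then Step.U else Step.D) = Step.H ∨
      (if π r = r then Step.H else if r < π r then Step.U else Step.D) = Step.U) ↔
      (r : ℕ) ≤ ((π r : Fin n) : ℕ) := by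
    split_ifs with hfix hup
    · simp [hfix]
    · have hv := Fin.lt_def.mp hup
      simp
      omega
    · have hv : π r < r := lt_of_le_of_ne (not_lt.mp hup) hfix
      have := Fin.lt_def.mp hv
      simp
      omega
  rw [hA, hB, hC]
  have hpval : (p : ℕ) = i := rfl
  have hqval : (q : ℕ) = i + 1 := rfl
  have hrval : (r : ℕ) = i + 2 := rfl
  constructor
  · rintro ⟨hab, hbc⟩
    have hq : π q = q :=
      mid_fixed π h₁ h₂ p q r rfl rfl (Fin.lt_def.mpr hab) (Fin.lt_def.mpr hbc)
    have hqv : ((π q : Fin n) : ℕ) = i + 1 := by rw [hq]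
    exact ⟨by omega, hq, by omega⟩
  · rintro ⟨ha, hb, hc⟩
    have hqv : ((π q : Fin n) : ℕ) = i + 1 := by rw [hb]
    omega

end MyAux

/-- For `π ∈ I_n(3412)`: the number of occurrences of the
consecutive pattern 123 in `π` equals the total number of occurrences in `Ψ(π)` of
the factors `HHH, HHU, DHH, DHU`. -/
theorem occC123_eq_factors (n : ℕ) (π : Equiv.Perm (Fin n))
    (h₁ : IsInvolution π) (h₂ : ¬ Contains3412 π) :
    occC123 π =
      occFactor [Step.H, Step.H, Step.H] (psiWord π) +
      occFactor [Step.H, Step.H, Step.U] (psiWord π) +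
      occFactor [Step.D, Step.H, Step.H] (psiWord π) +
      occFactor [Step.D, Step.H, Step.U] (psiWord π) := by
  classical
  set w := psiWord π with hw
  have hwl : w.length = n := psiWord_length π
  have key : ∀ i, i + 2 < n →
      ((pv π i < pv π (i + 1) ∧ pv π (i + 1) < pv π (i + 2)) ↔
        (w.getD i Step.H = Step.H ∨ w.getD i Step.H = Step.D) ∧
        w.getD (i + 1) Step.H = Step.H ∧
        (w.getD (i + 2) Step.H = Step.H ∨ w.getD (i + 2) Step.H = Step.U)) :=
    fun i hi => pointwise_iff π h₁ h₂ i hi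
  have hdisj : ∀ (a b c a' b' c' : Step), [a,b,c] ≠ [a',b',c'] →
      Disjoint ((Finset.range w.length).filter fun i => [a,b,c] <+: w.drop i)
        ((Finset.range w.length).filter fun i => [a',b',c'] <+: w.drop i) := by
    intro a b c a' b' c' hne
    rw [Finset.disjoint_left]
    intro x hx hx'
    rw [Finset.mem_filter] at hx hx'
    rw [prefix3_iff] at hx hx'
    exact hne (by rw [← hx.2.2.1, ← hx.2.2.2.1, ← hx.2.2.2.2,
      hx'.2.2.1, hx'.2.2.2.1, hx'.2.2.2.2])
  have hsum : occFactor [Step.H, Step.H, Step.H] w +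
      occFactor [Step.H, Step.H, Step.U] w +
      occFactor [Step.D, Step.H, Step.H] w +
      occFactor [Step.D, Step.H, Step.U] w =
      ((Finset.range w.length).filter fun i =>
        ([Step.H, Step.H, Step.H] <+: w.drop i) ∨
        ([Step.H, Step.H, Step.U] <+: w.drop i) ∨
        ([Step.D, Step.H, Step.H] <+: w.drop i) ∨
        ([Step.D, Step.H, Step.U] <+: w.drop i)).card := by
    unfold occFactor
    have d34 := hdisj Step.D Step.H Step.H Step.D Step.H Step.U (by decide)
    have d2 : Disjoint
        ((Finset.range w.length).filter fun i => [Step.H, Step.H, Step.U] <+: w.drop i)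
        (((Finset.range w.length).filter fun i => [Step.D, Step.H, Step.H] <+: w.drop i) ∪
          ((Finset.range w.length).filter fun i => [Step.D, Step.H, Step.U] <+: w.drop i)) :=
      Finset.disjoint_union_right.mpr
        ⟨hdisj Step.H Step.H Step.U Step.D Step.H Step.H (by decide),
         hdisj Step.H Step.H Step.U Step.D Step.H Step.U (by decide)⟩
    have d1 : Disjoint
        ((Finset.range w.length).filter fun i => [Step.H, Step.H, Step.H] <+: w.drop i)
        (((Finset.range w.length).filter fun i => [Step.H, Step.H, Step.U] <+: w.drop i) ∪
          (((Finset.range w.length).filter fun i => [Step.D, Step.H, Step.H] <+: w.drop i) ∪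
            ((Finset.range w.length).filter fun i => [Step.D, Step.H, Step.U] <+: w.drop i))) :=
      Finset.disjoint_union_right.mpr
        ⟨hdisj Step.H Step.H Step.H Step.H Step.H Step.U (by decide),
         Finset.disjoint_union_right.mpr
          ⟨hdisj Step.H Step.H Step.H Step.D Step.H Step.H (by decide),
           hdisj Step.H Step.H Step.H Step.D Step.H Step.U (by decide)⟩⟩
    rw [Finset.filter_or, Finset.filter_or, Finset.filter_or,
      Finset.card_union_of_disjoint d1, Finset.card_union_of_disjoint d2,
      Finset.card_union_of_disjoint d34]
    ring
  rw [hsum]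
  unfold occC123
  rw [hwl]
  apply Finset.card_nbij id
  · intro x hx
    simp only [id_eq, Finset.mem_coe, Finset.mem_filter, Finset.mem_range] at hx ⊢
    obtain ⟨hxr, hP⟩ := hx
    have hx2 : x + 2 < n := by omega
    have := (key x hx2).mp hP
    refine ⟨by omega, ?_⟩
    rw [prefix3_iff, prefix3_iff, prefix3_iff, prefix3_iff, hwl]
    tauto
  · intro x hx y hy hxy
    exact hxy
  · intro y hy
    simp only [id_eq, Finset.coe_filter, Set.mem_image, Set.mem_setOf_eq,
      Finset.mem_range] at hy ⊢
    obtain ⟨hyr, hQ⟩ := hy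
    rw [prefix3_iff, prefix3_iff, prefix3_iff, prefix3_iff, hwl] at hQ
    have hy2 : y + 2 < n := by tauto
    refine ⟨y, ⟨by omega, (key y hy2).mpr ?_⟩, rfl⟩
    tauto
end

section
/- Let π ∈ I_n(3412). Then the number of occurrences of the consecutive pattern 321 in π (indices i with π_i > π_{i+1} > π_{i+2}) equals the total number of occurrences in the Motzkin path Ψ(π) of the factors UU, DD and UHD. -/
open scoped Classical

section Aux

lemma aux_prefix2 {α : Type*} (x y : α) (l : List α) :
    [x, y] <+: l ↔ l[0]? = some x ∧ l[1]? = some y := by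
  constructor
  · rintro ⟨t, rfl⟩; simp
  · rintro ⟨h0, h1⟩
    cases l with
    | nil => simp at h0
    | cons a t =>
      cases t with
      | nil => simp at h1
      | cons b t => simp at h0 h1; subst h0; subst h1; exact ⟨t, rfl⟩

lemma aux_prefix3 {α : Type*} (x y z : α) (l : List α) :
    [x, y, z] <+: l ↔ l[0]? = some x ∧ l[1]? = some y ∧ l[2]? = some z := by
  constructor
  · rintro ⟨t, rfl⟩; simp
  · rintro ⟨h0, h1, h2⟩
    cases l with
    | nil => simp at h0
    | cons a t =>
      cases t with
      | nil => simp at h1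
      | cons b t =>
        cases t with
        | nil => simp at h2
        | cons c t =>
          simp at h0 h1 h2; subst h0; subst h1; subst h2; exact ⟨t, rfl⟩

lemma aux_ofFn_get {α : Type*} {n : ℕ} (f : Fin n → α) (j : ℕ) (h : j < n) :
    (List.ofFn f)[j]? = some (f ⟨j, h⟩) := by
  rw [List.getElem?_eq_getElem (by simpa using h)]; simp

end Aux

lemma aux_key {n : ℕ} (π : Equiv.Perm (Fin n)) (h₁ : IsInvolution π)
    (h₂ : ¬ Contains3412 π) (P0 P1 P2 : Fin n)
    (e0 : (P1 : ℕ) = (P0 : ℕ) + 1) (e1 : (P2 : ℕ) = (P1 : ℕ) + 1) :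
    (π P2 < π P1 ∧ π P1 < π P0) ↔
      (P0 < π P0 ∧ P1 < π P1) ∨ (π P1 < P1 ∧ π P2 < P2) ∨
      (P0 < π P0 ∧ π P1 = P1 ∧ π P2 < P2) := by
  have pA : π (π P0) = P0 := h₁ P0
  have pB : π (π P1) = P1 := h₁ P1
  have pC : π (π P2) = P2 := h₁ P2
  have injAB : π P0 ≠ π P1 := fun e => by
    have h := congrArg π e; rw [pA, pB] at h
    exact absurd (congrArg Fin.val h) (by omega)
  have injBC : π P1 ≠ π P2 := fun e => by
    have h := congrArg π e; rw [pB, pC] at h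
    exact absurd (congrArg Fin.val h) (by omega)
  have injAC : π P0 ≠ π P2 := fun e => by
    have h := congrArg π e; rw [pA, pC] at h
    exact absurd (congrArg Fin.val h) (by omega)
  constructor
  · rintro ⟨hCB, hBA⟩
    rw [Fin.lt_def] at hCB hBA
    rcases lt_trichotomy ((P1 : ℕ)) ((π P1 : ℕ)) with h | h | h
    · exact Or.inl ⟨Fin.lt_def.mpr (by omega), Fin.lt_def.mpr h⟩
    · exact Or.inr (Or.inr ⟨Fin.lt_def.mpr (by omega), Fin.ext h.symm,
        Fin.lt_def.mpr (by omega)⟩)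
    · exact Or.inr (Or.inl ⟨Fin.lt_def.mpr h, Fin.lt_def.mpr (by omega)⟩)
  · rintro (⟨h0, h1⟩ | ⟨h1, h2⟩ | ⟨h0, h1, h2⟩)
    · -- UU case
      rw [Fin.lt_def] at h0 h1
      have hBA : (π P1 : ℕ) < (π P0 : ℕ) := by
        rcases lt_trichotomy ((π P0 : ℕ)) ((π P1 : ℕ)) with h | h | h
        · exfalso
          have hA1 : (π P0 : ℕ) ≠ (P1 : ℕ) := by
            intro e
            have e' : π P0 = P1 := Fin.ext e
            have h' := congrArg π e'
            rw [pA] at h'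
            have := congrArg Fin.val h'
            omega
          refine h₂ ⟨P0, P1, π P0, π P1, ?_, ?_, ?_, ?_, ?_, ?_⟩ <;>
            simp only [Fin.lt_def, pA, pB] <;> omega
        · exact absurd (Fin.ext h) injAB
        · exact h
      have hCB : (π P2 : ℕ) < (π P1 : ℕ) := by
        rcases lt_trichotomy ((π P1 : ℕ)) ((π P2 : ℕ)) with h | h | h
        · exfalso
          by_cases hB2 : π P1 = P2
          · have h' := congrArg π hB2
            rw [pB] at h'
            have := congrArg Fin.val h'
            have := congrArg Fin.val hB2
            omega
          · have hB2' : (π P1 : ℕ) ≠ (P2 : ℕ) := fun e => hB2 (Fin.ext e)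
            refine h₂ ⟨P1, P2, π P1, π P2, ?_, ?_, ?_, ?_, ?_, ?_⟩ <;>
              simp only [Fin.lt_def, pB, pC] <;> omega
        · exact absurd (Fin.ext h) injBC
        · exact h
      exact ⟨Fin.lt_def.mpr hCB, Fin.lt_def.mpr hBA⟩
    · -- DD case
      rw [Fin.lt_def] at h1 h2
      have hCB : (π P2 : ℕ) < (π P1 : ℕ) := by
        rcases lt_trichotomy ((π P1 : ℕ)) ((π P2 : ℕ)) with h | h | h
        · exfalso
          by_cases hC1 : π P2 = P1
          · have h' := congrArg π hC1
            rw [pC] at h'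
            have := congrArg Fin.val h'
            have := congrArg Fin.val hC1
            omega
          · have hC1' : (π P2 : ℕ) ≠ (P1 : ℕ) := fun e => hC1 (Fin.ext e)
            refine h₂ ⟨π P1, π P2, P1, P2, ?_, ?_, ?_, ?_, ?_, ?_⟩ <;>
              simp only [Fin.lt_def, pB, pC] <;> omega
        · exact absurd (Fin.ext h) injBC
        · exact h
      have hBA : (π P1 : ℕ) < (π P0 : ℕ) := by
        rcases lt_trichotomy ((π P0 : ℕ)) ((π P1 : ℕ)) with h | h | h
        · exfalso
          by_cases hB0 : π P1 = P0
          · have h' := congrArg π hB0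
            rw [pB] at h'
            have := congrArg Fin.val h'
            have := congrArg Fin.val hB0
            omega
          · have hB0' : (π P1 : ℕ) ≠ (P0 : ℕ) := fun e => hB0 (Fin.ext e)
            by_cases hA0 : π P0 = P0
            · have := congrArg Fin.val hA0
              omega
            · have hA0' : (π P0 : ℕ) ≠ (P0 : ℕ) := fun e => hA0 (Fin.ext e)
              refine h₂ ⟨π P0, π P1, P0, P1, ?_, ?_, ?_, ?_, ?_, ?_⟩ <;>
                simp only [Fin.lt_def, pA, pB] <;> omega
        · exact absurd (Fin.ext h) injAB
        · exact h
      exact ⟨Fin.lt_def.mpr hCB, Fin.lt_def.mpr hBA⟩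
    · -- UHD case
      rw [Fin.lt_def] at h0 h2
      have e1' := congrArg Fin.val h1
      have hA1 : (π P0 : ℕ) ≠ (P1 : ℕ) := by
        intro e
        have e' : π P0 = P1 := Fin.ext e
        have h' := congrArg π e'
        rw [pA, h1] at h'
        have := congrArg Fin.val h'
        omega
      have hC1 : (π P2 : ℕ) ≠ (P1 : ℕ) := by
        intro e
        have e' : π P2 = P1 := Fin.ext e
        have h' := congrArg π e'
        rw [pC, h1] at h'
        have := congrArg Fin.val h'
        omega
      exact ⟨Fin.lt_def.mpr (by omega), Fin.lt_def.mpr (by omega)⟩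


/-- For `π ∈ I_n(3412)`: the number of occurrences of the
consecutive pattern 321 in `π` equals the total number of occurrences in `Ψ(π)` of
the factors `UU`, `DD` and `UHD`. -/
theorem occC321_eq_factors (n : ℕ) (π : Equiv.Perm (Fin n))
    (h₁ : IsInvolution π) (h₂ : ¬ Contains3412 π) :
    occC321 π =
      occFactor [Step.U, Step.U] (psiWord π) +
      occFactor [Step.D, Step.D] (psiWord π) +
      occFactor [Step.U, Step.H, Step.D] (psiWord π) := by
  classical
  have len : (psiWord π).length = n := by simp [psiWord]
  have getw : ∀ (j : ℕ) (h : j < n), (psiWord π)[j]? =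
      some (if π ⟨j, h⟩ = ⟨j, h⟩ then Step.H else
        if (⟨j, h⟩ : Fin n) < π ⟨j, h⟩ then Step.U else Step.D) := by
    intro j h
    unfold psiWord
    exact aux_ofFn_get _ j h
  have getnone : ∀ j : ℕ, ¬ j < n → (psiWord π)[j]? = none := by
    intro j h
    rw [List.getElem?_eq_none]
    rw [len]; omega
  have wU : ∀ (j : ℕ) (h : j < n),
      ((psiWord π)[j]? = some Step.U ↔ (⟨j, h⟩ : Fin n) < π ⟨j, h⟩) := by
    intro j h
    rw [getw j h, Option.some_inj]
    split_ifs with hf hl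
    · exact iff_of_false (by simp) (by rw [hf]; exact lt_irrefl _)
    · exact iff_of_true rfl hl
    · exact iff_of_false (by simp) hl
  have wD : ∀ (j : ℕ) (h : j < n),
      ((psiWord π)[j]? = some Step.D ↔ π ⟨j, h⟩ < (⟨j, h⟩ : Fin n)) := by
    intro j h
    rw [getw j h, Option.some_inj]
    split_ifs with hf hl
    · exact iff_of_false (by simp) (by rw [hf]; exact lt_irrefl _)
    · exact iff_of_false (by simp) (asymm hl)
    · exact iff_of_true rfl ((not_lt.mp hl).lt_of_ne fun e => hf e)
  have wH : ∀ (j : ℕ) (h : j < n),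
      ((psiWord π)[j]? = some Step.H ↔ π ⟨j, h⟩ = (⟨j, h⟩ : Fin n)) := by
    intro j h
    rw [getw j h, Option.some_inj]
    split_ifs with hf hl
    · exact iff_of_true rfl hf
    · exact iff_of_false (by simp) (fun e => absurd (e ▸ hl) (lt_irrefl _))
    · exact iff_of_false (by simp) hf
  -- the three occFactor computations
  have occA : occFactor [Step.U, Step.U] (psiWord π) =
      ((Finset.range (n - 2)).filter fun i =>
        (psiWord π)[i]? = some Step.U ∧ (psiWord π)[i + 1]? = some Step.U).card := by
    unfold occFactor
    congr 1
    rw [len]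
    ext i
    simp only [Finset.mem_filter, Finset.mem_range, aux_prefix2, List.getElem?_drop,
      Nat.add_zero]
    constructor
    · rintro ⟨hi, hx, hy⟩
      have h1 : i + 1 < n := by
        by_contra hc; rw [getnone _ hc] at hy; cases hy
      have hv := Fin.lt_def.mp ((wU (i + 1) h1).mp hy)
      have hb := (π (⟨i + 1, h1⟩ : Fin n)).isLt
      exact ⟨by simp only [Fin.val_mk] at hv; omega, hx, hy⟩
    · rintro ⟨hi, hx, hy⟩
      exact ⟨by omega, hx, hy⟩
  have occT : occFactor [Step.U, Step.H, Step.D] (psiWord π) =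
      ((Finset.range (n - 2)).filter fun i =>
        (psiWord π)[i]? = some Step.U ∧ (psiWord π)[i + 1]? = some Step.H ∧
          (psiWord π)[i + 2]? = some Step.D).card := by
    unfold occFactor
    congr 1
    rw [len]
    ext i
    simp only [Finset.mem_filter, Finset.mem_range, aux_prefix3, List.getElem?_drop,
      Nat.add_zero]
    constructor
    · rintro ⟨hi, hx, hy, hz⟩
      have h2 : i + 2 < n := by
        by_contra hc; rw [getnone _ hc] at hz; cases hz
      exact ⟨by omega, hx, hy, hz⟩
    · rintro ⟨hi, hx, hy, hz⟩
      exact ⟨by omega, hx, hy, hz⟩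
  have occD : occFactor [Step.D, Step.D] (psiWord π) =
      ((Finset.range (n - 2)).filter fun i =>
        (psiWord π)[i + 1]? = some Step.D ∧ (psiWord π)[i + 2]? = some Step.D).card := by
    unfold occFactor
    rw [len]
    have himg : ((Finset.range n).filter fun i =>
        [Step.D, Step.D] <+: (psiWord π).drop i) =
        (((Finset.range (n - 2)).filter fun i =>
          (psiWord π)[i + 1]? = some Step.D ∧ (psiWord π)[i + 2]? = some Step.D).image
            (· + 1)) := by
      ext i
      simp only [Finset.mem_image, Finset.mem_filter, Finset.mem_range, aux_prefix2,
        List.getElem?_drop, Nat.add_zero]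
      constructor
      · rintro ⟨hi, hx, hy⟩
        have h1 : i + 1 < n := by
          by_contra hc; rw [getnone _ hc] at hy; cases hy
        have h0 : i < n := by omega
        have hv := Fin.lt_def.mp ((wD i h0).mp hx)
        simp only [Fin.val_mk] at hv
        have hpos : 1 ≤ i := by omega
        refine ⟨i - 1, ⟨by omega, ?_, ?_⟩, by omega⟩
        · rw [show i - 1 + 1 = i from by omega]; exact hx
        · rw [show i - 1 + 2 = i + 1 from by omega]; exact hy
      · rintro ⟨j, ⟨hj, hx, hy⟩, rfl⟩
        have h2 : j + 2 < n := by
          by_contra hc; rw [getnone _ hc] at hy; cases hy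
        refine ⟨by omega, hx, ?_⟩
        rw [show j + 1 + 1 = j + 2 from by omega]; exact hy
    rw [himg, Finset.card_image_of_injective _ (add_left_injective 1)]
  -- the pointwise characterization
  have occ4 : occC321 π = ((Finset.range (n - 2)).filter fun i =>
      ((psiWord π)[i]? = some Step.U ∧ (psiWord π)[i + 1]? = some Step.U) ∨
      ((psiWord π)[i + 1]? = some Step.D ∧ (psiWord π)[i + 2]? = some Step.D) ∨
      ((psiWord π)[i]? = some Step.U ∧ (psiWord π)[i + 1]? = some Step.H ∧
        (psiWord π)[i + 2]? = some Step.D)).card := by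
    unfold occC321
    refine congrArg Finset.card (Finset.filter_congr ?_)
    intro i hi
    rw [Finset.mem_range] at hi
    have h2 : i + 2 < n := by omega
    have h1 : i + 1 < n := by omega
    have h0 : i < n := by omega
    have K := aux_key π h₁ h₂ ⟨i, h0⟩ ⟨i + 1, h1⟩ ⟨i + 2, h2⟩ rfl rfl
    simp only [pv, dif_pos h0, dif_pos h1, dif_pos h2]
    constructor
    · rintro ⟨ha, hb⟩
      rcases K.mp ⟨Fin.lt_def.mpr ha, Fin.lt_def.mpr hb⟩ with ⟨x, y⟩ | ⟨x, y⟩ | ⟨x, y, z⟩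
      · exact Or.inl ⟨(wU i h0).mpr x, (wU (i + 1) h1).mpr y⟩
      · exact Or.inr (Or.inl ⟨(wD (i + 1) h1).mpr x, (wD (i + 2) h2).mpr y⟩)
      · exact Or.inr (Or.inr ⟨(wU i h0).mpr x, (wH (i + 1) h1).mpr y,
          (wD (i + 2) h2).mpr z⟩)
    · intro hor
      have hK : π ⟨i + 2, h2⟩ < π ⟨i + 1, h1⟩ ∧ π ⟨i + 1, h1⟩ < π ⟨i, h0⟩ := by
        apply K.mpr
        rcases hor with ⟨x, y⟩ | ⟨x, y⟩ | ⟨x, y, z⟩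
        · exact Or.inl ⟨(wU i h0).mp x, (wU (i + 1) h1).mp y⟩
        · exact Or.inr (Or.inl ⟨(wD (i + 1) h1).mp x, (wD (i + 2) h2).mp y⟩)
        · exact Or.inr (Or.inr ⟨(wU i h0).mp x, (wH (i + 1) h1).mp y,
            (wD (i + 2) h2).mp z⟩)
      exact ⟨Fin.lt_def.mp hK.1, Fin.lt_def.mp hK.2⟩
  rw [occ4, occA, occD, occT]
  rw [Finset.filter_or, Finset.filter_or]
  rw [Finset.card_union_of_disjoint, Finset.card_union_of_disjoint]
  · omega
  · -- Disjoint QB QT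
    rw [Finset.disjoint_left]
    intro a ha hb
    rw [Finset.mem_filter] at ha hb
    rw [ha.2.1] at hb
    have := hb.2.2.1
    simp at this
  · -- Disjoint QA (QB ∪ QT)
    rw [Finset.disjoint_left]
    intro a ha hb
    rw [Finset.mem_filter] at ha
    rw [Finset.mem_union, Finset.mem_filter, Finset.mem_filter] at hb
    rcases hb with hb | hb
    · rw [ha.2.2] at hb
      have := hb.2.1
      simp at this
    · rw [ha.2.2] at hb
      have := hb.2.2.1
      simp at this
end
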